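/- arXiv:2105.08578 — 6 statements merged into one kernel-verified Lean document; each statement's English description precedes it below -/
import Mathlib

section
/- Let A ⊆ ℝⁿ be a Borel set, ε ∈ (0,1), let f : A → ℝᵏ be a Lipschitz map, and let Φ : f(A) → ℝˡ be a (1±ε)-bi-Lipschitz embedding. Let F : ℝⁿ → ℝᵏ and G : ℝⁿ → ℝˡ be any Lipschitz maps with F|_A = f and G|_A = Φ ∘ f. Then for ℒⁿ-a.e. x ∈ A and every v ∈ ℝⁿ, (1−ε)² ‖DF(x) v‖² ≤ ‖DG(x) v‖² ≤ (1+ε)² ‖DF(x) v‖². -/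
open Metric Set MeasureTheory
open scoped NNReal ENNReal
open scoped Pointwise

/-- Let `A ⊆ ℝⁿ` be Borel, `ε ∈ (0,1)`, `f : A → ℝᵏ` Lipschitz, and `Φ : f(A) → ℝˡ` a
`(1±ε)`-bi-Lipschitz embedding. If `F : ℝⁿ → ℝᵏ` and `G : ℝⁿ → ℝˡ` are Lipschitz maps with
`F|_A = f` and `G|_A = Φ ∘ f`, then for `ℒⁿ`-a.e. `x ∈ A` and every `v ∈ ℝⁿ`,
`(1−ε)² ‖DF(x) v‖² ≤ ‖DG(x) v‖² ≤ (1+ε)² ‖DF(x) v‖²`. -/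
theorem stmt4 (n k l : ℕ) (A : Set (EuclideanSpace ℝ (Fin n))) (hA : MeasurableSet A)
    (ε : ℝ) (hε : ε ∈ Set.Ioo (0:ℝ) 1)
    (f : EuclideanSpace ℝ (Fin n) → EuclideanSpace ℝ (Fin k))
    (hf : ∃ K : ℝ≥0, LipschitzOnWith K f A)
    (Φ : EuclideanSpace ℝ (Fin k) → EuclideanSpace ℝ (Fin l))
    (hΦ : ∀ y ∈ f '' A, ∀ z ∈ f '' A,
      (1 - ε) * dist y z ≤ dist (Φ y) (Φ z) ∧ dist (Φ y) (Φ z) ≤ (1 + ε) * dist y z)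
    (F : EuclideanSpace ℝ (Fin n) → EuclideanSpace ℝ (Fin k))
    (hF : ∃ K : ℝ≥0, LipschitzWith K F) (hFA : ∀ x ∈ A, F x = f x)
    (G : EuclideanSpace ℝ (Fin n) → EuclideanSpace ℝ (Fin l))
    (hG : ∃ K : ℝ≥0, LipschitzWith K G) (hGA : ∀ x ∈ A, G x = Φ (f x)) :
    ∀ᵐ x ∂(volume.restrict A), ∀ v : EuclideanSpace ℝ (Fin n),
      (1 - ε) ^ 2 * ‖fderiv ℝ F x v‖ ^ 2 ≤ ‖fderiv ℝ G x v‖ ^ 2 ∧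
      ‖fderiv ℝ G x v‖ ^ 2 ≤ (1 + ε) ^ 2 * ‖fderiv ℝ F x v‖ ^ 2 := by
  obtain ⟨hε0, hε1⟩ := hε
  obtain ⟨KF, hKF⟩ := hF
  obtain ⟨KG, hKG⟩ := hG
  filter_upwards [Besicovitch.ae_tendsto_measure_inter_div volume A,
    ae_restrict_mem hA, ae_restrict_of_ae (hKF.ae_differentiableAt (μ := volume)),
    ae_restrict_of_ae (hKG.ae_differentiableAt (μ := volume))] with x hx xA hFd hGd
  intro v
  set F' := fderiv ℝ F x with hF'def
  set G' := fderiv ℝ G x with hG'def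
  have key : (1 - ε) * ‖F' v‖ ≤ ‖G' v‖ ∧ ‖G' v‖ ≤ (1 + ε) * ‖F' v‖ := by
    have main : ∀ η ∈ Set.Ioc (0:ℝ) 1,
        (1 - ε) * ‖F' v‖ ≤ ‖G' v‖ + ((1 - ε) * ‖F'‖ + ‖G'‖ + 2 * (‖v‖ + 1)) * η ∧
        ‖G' v‖ ≤ (1 + ε) * ‖F' v‖
          + ((1 + ε) * (‖F'‖ + (‖v‖ + 1)) + (‖v‖ + 1) + ‖G'‖) * η := by
      rintro η ⟨ηpos, η1⟩
      have hFη : ∀ᶠ y in nhds x, ‖F y - F x - F' (y - x)‖ ≤ η * ‖y - x‖ :=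
        hFd.hasFDerivAt.isLittleO.def ηpos
      have hGη : ∀ᶠ y in nhds x, ‖G y - G x - G' (y - x)‖ ≤ η * ‖y - x‖ :=
        hGd.hasFDerivAt.isLittleO.def ηpos
      obtain ⟨ρ, ρpos, hρ⟩ := Metric.eventually_nhds_iff_ball.1 (hFη.and hGη)
      have B₁ : ∀ᶠ r in nhdsWithin (0:ℝ) (Set.Ioi 0),
          (A ∩ ({x} + r • closedBall v η)).Nonempty :=
        Measure.eventually_nonempty_inter_smul_of_density_one volume A x hx _
          measurableSet_closedBall (measure_closedBall_pos volume v ηpos).ne'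
      have B₂ : ∀ᶠ r in nhdsWithin (0:ℝ) (Set.Ioi 0),
          {x} + r • closedBall v η ⊆ ball x ρ :=
        nhdsWithin_le_nhds
          (eventually_singleton_add_smul_subset isBounded_closedBall (ball_mem_nhds x ρpos))
      obtain ⟨r, ⟨y, yA, hy⟩, rρ, rpos⟩ :
          ∃ r : ℝ, (A ∩ ({x} + r • closedBall v η)).Nonempty ∧
            ({x} + r • closedBall v η ⊆ ball x ρ) ∧ 0 < r :=
        (B₁.and (B₂.and self_mem_nhdsWithin)).exists
      obtain ⟨a, av, ya⟩ : ∃ a, a ∈ closedBall v η ∧ y = x + r • a := by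
        simp only [mem_smul_set, image_add_left, mem_preimage, singleton_add] at hy
        rcases hy with ⟨a, az, ha⟩
        exact ⟨a, az, by rw [ha]; abel⟩
      obtain ⟨hFy, hGy⟩ := hρ y (rρ hy)
      have hyx : y - x = r • a := by rw [ya]; abel
      have hav : ‖a - v‖ ≤ η := mem_closedBall_iff_norm.1 av
      have hva : ‖v - a‖ ≤ η := by rw [norm_sub_rev]; exact hav
      have hna : ‖a‖ ≤ ‖v‖ + 1 := by
        calc ‖a‖ = ‖v + (a - v)‖ := by rw [show v + (a - v) = a from by abel]
          _ ≤ ‖v‖ + ‖a - v‖ := norm_add_le _ _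
          _ ≤ ‖v‖ + 1 := by linarith
      have hyxn : ‖y - x‖ = r * ‖a‖ := by
        rw [hyx, norm_smul, Real.norm_eq_abs, abs_of_pos rpos]
      have hF'a : ‖F' (y - x)‖ = r * ‖F' a‖ := by
        rw [hyx, _root_.map_smul, norm_smul, Real.norm_eq_abs, abs_of_pos rpos]
      have hG'a : ‖G' (y - x)‖ = r * ‖G' a‖ := by
        rw [hyx, _root_.map_smul, norm_smul, Real.norm_eq_abs, abs_of_pos rpos]
      -- bilipschitz estimates on A
      have hΦyx := hΦ (f y) ⟨y, yA, rfl⟩ (f x) ⟨x, xA, rfl⟩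
      have hdF : dist (f y) (f x) = ‖F y - F x‖ := by
        rw [hFA y yA, hFA x xA, dist_eq_norm]
      have hdG : dist (Φ (f y)) (Φ (f x)) = ‖G y - G x‖ := by
        rw [hGA y yA, hGA x xA, dist_eq_norm]
      have hlow : (1 - ε) * ‖F y - F x‖ ≤ ‖G y - G x‖ := by
        rw [← hdF, ← hdG]; exact hΦyx.1
      have hup : ‖G y - G x‖ ≤ (1 + ε) * ‖F y - F x‖ := by
        rw [← hdF, ← hdG]; exact hΦyx.2
      -- first order estimates
      have eF1 : ‖F y - F x‖ ≤ r * ‖F' a‖ + η * (r * ‖a‖) := by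
        have h := norm_add_le (F' (y - x)) (F y - F x - F' (y - x))
        rw [show F' (y - x) + (F y - F x - F' (y - x)) = F y - F x from by abel] at h
        calc ‖F y - F x‖ ≤ ‖F' (y - x)‖ + ‖F y - F x - F' (y - x)‖ := h
          _ ≤ r * ‖F' a‖ + η * (r * ‖a‖) := by rw [hF'a]; gcongr; rw [← hyxn]; exact hFy
      have eF2 : r * ‖F' a‖ ≤ ‖F y - F x‖ + η * (r * ‖a‖) := by
        have h := norm_sub_le (F y - F x) (F y - F x - F' (y - x))
        rw [show F y - F x - (F y - F x - F' (y - x)) = F' (y - x) from by abel] at h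
        calc r * ‖F' a‖ = ‖F' (y - x)‖ := hF'a.symm
          _ ≤ ‖F y - F x‖ + ‖F y - F x - F' (y - x)‖ := h
          _ ≤ ‖F y - F x‖ + η * (r * ‖a‖) := by gcongr; rw [← hyxn]; exact hFy
      have eG1 : ‖G y - G x‖ ≤ r * ‖G' a‖ + η * (r * ‖a‖) := by
        have h := norm_add_le (G' (y - x)) (G y - G x - G' (y - x))
        rw [show G' (y - x) + (G y - G x - G' (y - x)) = G y - G x from by abel] at h
        calc ‖G y - G x‖ ≤ ‖G' (y - x)‖ + ‖G y - G x - G' (y - x)‖ := h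
          _ ≤ r * ‖G' a‖ + η * (r * ‖a‖) := by rw [hG'a]; gcongr; rw [← hyxn]; exact hGy
      have eG2 : r * ‖G' a‖ ≤ ‖G y - G x‖ + η * (r * ‖a‖) := by
        have h := norm_sub_le (G y - G x) (G y - G x - G' (y - x))
        rw [show G y - G x - (G y - G x - G' (y - x)) = G' (y - x) from by abel] at h
        calc r * ‖G' a‖ = ‖G' (y - x)‖ := hG'a.symm
          _ ≤ ‖G y - G x‖ + ‖G y - G x - G' (y - x)‖ := h
          _ ≤ ‖G y - G x‖ + η * (r * ‖a‖) := by gcongr; rw [← hyxn]; exact hGy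
      -- comparing values at a and at v
      have cF1 : ‖F' a‖ ≤ ‖F' v‖ + ‖F'‖ * η := by
        calc ‖F' a‖ = ‖F' v + F' (a - v)‖ := by rw [← _root_.map_add, show v + (a - v) = a from by abel]
          _ ≤ ‖F' v‖ + ‖F' (a - v)‖ := norm_add_le _ _
          _ ≤ ‖F' v‖ + ‖F'‖ * η :=
              add_le_add_right ((F'.le_opNorm _).trans
                (mul_le_mul_of_nonneg_left hav F'.opNorm_nonneg)) _
      have cF2 : ‖F' v‖ ≤ ‖F' a‖ + ‖F'‖ * η := by
        calc ‖F' v‖ = ‖F' a + F' (v - a)‖ := by rw [← _root_.map_add, show a + (v - a) = v from by abel]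
          _ ≤ ‖F' a‖ + ‖F' (v - a)‖ := norm_add_le _ _
          _ ≤ ‖F' a‖ + ‖F'‖ * η :=
              add_le_add_right ((F'.le_opNorm _).trans
                (mul_le_mul_of_nonneg_left hva F'.opNorm_nonneg)) _
      have cG1 : ‖G' a‖ ≤ ‖G' v‖ + ‖G'‖ * η := by
        calc ‖G' a‖ = ‖G' v + G' (a - v)‖ := by rw [← _root_.map_add, show v + (a - v) = a from by abel]
          _ ≤ ‖G' v‖ + ‖G' (a - v)‖ := norm_add_le _ _
          _ ≤ ‖G' v‖ + ‖G'‖ * η :=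
              add_le_add_right ((G'.le_opNorm _).trans
                (mul_le_mul_of_nonneg_left hav G'.opNorm_nonneg)) _
      have cG2 : ‖G' v‖ ≤ ‖G' a‖ + ‖G'‖ * η := by
        calc ‖G' v‖ = ‖G' a + G' (v - a)‖ := by rw [← _root_.map_add, show a + (v - a) = v from by abel]
          _ ≤ ‖G' a‖ + ‖G' (v - a)‖ := norm_add_le _ _
          _ ≤ ‖G' a‖ + ‖G'‖ * η :=
              add_le_add_right ((G'.le_opNorm _).trans
                (mul_le_mul_of_nonneg_left hva G'.opNorm_nonneg)) _
      have hW : η * (r * ‖a‖) ≤ r * (η * (‖v‖ + 1)) := by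
        have h := mul_le_mul_of_nonneg_left
          (mul_le_mul_of_nonneg_left hna ηpos.le) rpos.le
        calc η * (r * ‖a‖) = r * (η * ‖a‖) := by ring
          _ ≤ r * (η * (‖v‖ + 1)) := h
      have h1ε : (0:ℝ) < 1 - ε := by linarith
      constructor
      · -- lower bound
        rw [← mul_le_mul_iff_right₀ rpos]
        calc r * ((1 - ε) * ‖F' v‖)
            ≤ r * ((1 - ε) * (‖F' a‖ + ‖F'‖ * η)) := by gcongr
          _ = (1 - ε) * (r * ‖F' a‖) + r * ((1 - ε) * (‖F'‖ * η)) := by ring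
          _ ≤ (1 - ε) * (‖F y - F x‖ + η * (r * ‖a‖)) + r * ((1 - ε) * (‖F'‖ * η)) := by
              gcongr
          _ = (1 - ε) * ‖F y - F x‖ + (1 - ε) * (η * (r * ‖a‖))
                + r * ((1 - ε) * (‖F'‖ * η)) := by ring
          _ ≤ ‖G y - G x‖ + 1 * (η * (r * ‖a‖)) + r * ((1 - ε) * (‖F'‖ * η)) :=
              add_le_add (add_le_add hlow (mul_le_mul_of_nonneg_right
                (by linarith : (1 - ε) ≤ 1)
                (mul_nonneg ηpos.le (mul_nonneg rpos.le (norm_nonneg _))))) le_rfl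
          _ ≤ (r * ‖G' a‖ + η * (r * ‖a‖)) + 1 * (η * (r * ‖a‖))
                + r * ((1 - ε) * (‖F'‖ * η)) := by gcongr
          _ ≤ (r * (‖G' v‖ + ‖G'‖ * η) + r * (η * (‖v‖ + 1)))
                + 1 * (r * (η * (‖v‖ + 1))) + r * ((1 - ε) * (‖F'‖ * η)) :=
              add_le_add (add_le_add (add_le_add
                (mul_le_mul_of_nonneg_left cG1 rpos.le) hW)
                (mul_le_mul_of_nonneg_left hW zero_le_one)) le_rfl
          _ = r * (‖G' v‖ + ((1 - ε) * ‖F'‖ + ‖G'‖ + 2 * (‖v‖ + 1)) * η) := by ring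
      · -- upper bound
        rw [← mul_le_mul_iff_right₀ rpos]
        calc r * ‖G' v‖ ≤ r * (‖G' a‖ + ‖G'‖ * η) := by gcongr
          _ = r * ‖G' a‖ + r * (‖G'‖ * η) := by ring
          _ ≤ (‖G y - G x‖ + η * (r * ‖a‖)) + r * (‖G'‖ * η) := by gcongr
          _ ≤ ((1 + ε) * ‖F y - F x‖ + η * (r * ‖a‖)) + r * (‖G'‖ * η) := by gcongr
          _ ≤ ((1 + ε) * (r * ‖F' a‖ + η * (r * ‖a‖)) + η * (r * ‖a‖)) + r * (‖G'‖ * η) := by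
              gcongr
          _ ≤ ((1 + ε) * (r * (‖F' v‖ + ‖F'‖ * η) + r * (η * (‖v‖ + 1)))
                + r * (η * (‖v‖ + 1))) + r * (‖G'‖ * η) :=
              add_le_add (add_le_add (mul_le_mul_of_nonneg_left
                (add_le_add (mul_le_mul_of_nonneg_left cF1 rpos.le) hW) (by linarith)) hW)
                le_rfl
          _ = r * ((1 + ε) * ‖F' v‖
                + ((1 + ε) * (‖F'‖ + (‖v‖ + 1)) + (‖v‖ + 1) + ‖G'‖) * η) := by ring
    have hIoc : Set.Ioc (0:ℝ) 1 ∈ nhdsWithin (0:ℝ) (Set.Ioi 0) :=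
      Ioc_mem_nhdsGT_of_mem ⟨le_refl 0, zero_lt_one⟩
    constructor
    · have T : Filter.Tendsto
          (fun η : ℝ => ‖G' v‖ + ((1 - ε) * ‖F'‖ + ‖G'‖ + 2 * (‖v‖ + 1)) * η)
          (nhdsWithin (0:ℝ) (Set.Ioi 0)) (nhds (‖G' v‖ + ((1 - ε) * ‖F'‖ + ‖G'‖ + 2 * (‖v‖ + 1)) * 0)) :=
        ((continuous_const.add (continuous_const.mul continuous_id)).tendsto 0).mono_left
          nhdsWithin_le_nhds
      simp only [mul_zero, add_zero] at T
      refine ge_of_tendsto T ?_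
      filter_upwards [hIoc] with η hη using (main η hη).1
    · have T : Filter.Tendsto
          (fun η : ℝ => (1 + ε) * ‖F' v‖ + ((1 + ε) * (‖F'‖ + (‖v‖ + 1)) + (‖v‖ + 1) + ‖G'‖) * η)
          (nhdsWithin (0:ℝ) (Set.Ioi 0))
          (nhds ((1 + ε) * ‖F' v‖ + ((1 + ε) * (‖F'‖ + (‖v‖ + 1)) + (‖v‖ + 1) + ‖G'‖) * 0)) :=
        ((continuous_const.add (continuous_const.mul continuous_id)).tendsto 0).mono_left
          nhdsWithin_le_nhds
      simp only [mul_zero, add_zero] at T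
      refine ge_of_tendsto T ?_
      filter_upwards [hIoc] with η hη using (main η hη).2
  have h1ε : (0:ℝ) ≤ 1 - ε := by linarith
  constructor
  · calc (1 - ε) ^ 2 * ‖F' v‖ ^ 2 = ((1 - ε) * ‖F' v‖) ^ 2 := by ring
      _ ≤ ‖G' v‖ ^ 2 := by
          apply pow_le_pow_left₀ (mul_nonneg h1ε (norm_nonneg _)) key.1
  · calc ‖G' v‖ ^ 2 ≤ ((1 + ε) * ‖F' v‖) ^ 2 := by
          apply pow_le_pow_left₀ (norm_nonneg _) key.2
      _ = (1 + ε) ^ 2 * ‖F' v‖ ^ 2 := by ring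
end

section
/- Let A ⊆ ℝⁿ be a Borel set, ε ∈ (0,1), let f : A → ℝᵏ be a (1±ε)-bi-Lipschitz embedding, and let F : ℝⁿ → ℝᵏ be any Lipschitz map with F|_A = f. Then there is a constant C > 0 depending only on n such that for ℒⁿ-a.e. x ∈ A and all v, w ∈ ℝⁿ, |⟨DF(x) v, DF(x) w⟩ − ⟨v, w⟩| ≤ C ε ‖v‖ ‖w‖. -/
set_option maxHeartbeats 1000000

open Metric Set MeasureTheory Filter
open scoped NNReal ENNReal Topology

lemma aux_density_nonempty {n : ℕ} {A : Set (EuclideanSpace ℝ (Fin n))}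
    {x : EuclideanSpace ℝ (Fin n)}
    (hdens : Tendsto
      (fun r => volume (A ∩ closedBall x r) / volume (closedBall x r)) (𝓝[>] 0) (𝓝 1))
    {v : EuclideanSpace ℝ (Fin n)} (hv : ‖v‖ = 1) {δ : ℝ} (hδ : 0 < δ) :
    ∀ᶠ r in 𝓝[>] (0:ℝ), (A ∩ closedBall (x + r • v) (δ * r)).Nonempty := by
  have h1δ : (0:ℝ) < 1 + δ := by linarith
  set θ : ℝ≥0∞ := ENNReal.ofReal ((δ / (1 + δ)) ^ n) with hθdef
  have hθ0 : θ ≠ 0 := by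
    simp only [hθdef, ne_eq, ENNReal.ofReal_eq_zero, not_le]
    positivity
  have hsub : (1:ℝ≥0∞) - θ < 1 := ENNReal.sub_lt_self ENNReal.one_ne_top one_ne_zero hθ0
  have hcomp : Tendsto (fun r : ℝ => (1 + δ) * r) (𝓝[>] (0:ℝ)) (𝓝[>] (0:ℝ)) := by
    rw [tendsto_nhdsWithin_iff]
    constructor
    · have h := (show Continuous fun s : ℝ => (1 + δ) * s from continuous_const.mul continuous_id).tendsto 0
      simpa using h.mono_left nhdsWithin_le_nhds
    · exact eventually_mem_nhdsWithin.mono fun r hr => mul_pos h1δ hr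
  have H := (hdens.comp hcomp).eventually (eventually_gt_nhds hsub)
  filter_upwards [H, eventually_mem_nhdsWithin] with r hr hrpos
  by_contra hemp
  have hr0 : (0:ℝ) < r := hrpos
  rw [Set.not_nonempty_iff_eq_empty] at hemp
  set R := (1 + δ) * r with hR
  have hRpos : 0 < R := mul_pos h1δ hrpos
  have hδr : 0 ≤ δ * r := by positivity
  -- small ball inside big ball
  have hsubset : closedBall (x + r • v) (δ * r) ⊆ closedBall x R := by
    intro y hy
    rw [mem_closedBall] at hy ⊢
    have hd : dist (x + r • v) x = r := by
      rw [dist_eq_norm]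
      simp [norm_smul, abs_of_pos hr0, hv]
    calc dist y x ≤ dist y (x + r • v) + dist (x + r • v) x := dist_triangle _ _ _
      _ ≤ δ * r + r := add_le_add hy hd.le
      _ ≤ R := by rw [hR]; ring_nf; linarith
  have hdisj : Disjoint (A ∩ closedBall x R) (closedBall (x + r • v) (δ * r)) := by
    rw [Set.disjoint_left]
    intro y hy hy2
    have : y ∈ A ∩ closedBall (x + r • v) (δ * r) := ⟨hy.1, hy2⟩
    rw [hemp] at this
    exact this
  have hunion : volume (A ∩ closedBall x R) + volume (closedBall (x + r • v) (δ * r))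
      ≤ volume (closedBall x R) := by
    rw [← measure_union hdisj measurableSet_closedBall]
    exact measure_mono (Set.union_subset inter_subset_right hsubset)
  -- volumes
  have hvol_small : volume (closedBall (x + r • v) (δ * r))
      = ENNReal.ofReal ((δ * r) ^ n) * volume (closedBall (0 : EuclideanSpace ℝ (Fin n)) 1) := by
    rw [Measure.addHaar_closedBall' volume _ hδr, finrank_euclideanSpace_fin]
  have hvol_big : volume (closedBall x R)
      = ENNReal.ofReal (R ^ n) * volume (closedBall (0 : EuclideanSpace ℝ (Fin n)) 1) := by
    rw [Measure.addHaar_closedBall' volume _ hRpos.le, finrank_euclideanSpace_fin]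
  have hsmall_eq : volume (closedBall (x + r • v) (δ * r)) = θ * volume (closedBall x R) := by
    rw [hvol_small, hvol_big, hθdef, ← mul_assoc, ← ENNReal.ofReal_mul (by positivity)]
    congr 2
    rw [← mul_pow]
    congr 1
    rw [hR]; field_simp
  have hbig0 : volume (closedBall x R) ≠ 0 :=
    (measure_closedBall_pos volume x hRpos).ne'
  have hbigtop : volume (closedBall x R) ≠ ⊤ := measure_closedBall_lt_top.ne
  have hratio : volume (A ∩ closedBall x R) / volume (closedBall x R) ≤ 1 - θ := by
    rw [ENNReal.div_le_iff hbig0 hbigtop]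
    have h1 : volume (A ∩ closedBall x R) ≤ volume (closedBall x R) - θ * volume (closedBall x R) := by
      rw [← hsmall_eq]
      exact ENNReal.le_sub_of_add_le_right (measure_closedBall_lt_top.ne) hunion
    have h2 : (1 - θ) * volume (closedBall x R)
        = volume (closedBall x R) - θ * volume (closedBall x R) := by
      rw [ENNReal.sub_mul (fun _ _ => hbigtop), one_mul]
    rw [h2]; exact h1
  exact absurd hratio (not_le.2 hr)

lemma aux_deriv_bound {n k : ℕ} {A : Set (EuclideanSpace ℝ (Fin n))}
    {F : EuclideanSpace ℝ (Fin n) → EuclideanSpace ℝ (Fin k)} {ε : ℝ}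
    (hε : 0 < ε) (hε1 : ε < 1)
    (hbi : ∀ x ∈ A, ∀ y ∈ A, (1 - ε) * dist x y ≤ dist (F x) (F y) ∧
      dist (F x) (F y) ≤ (1 + ε) * dist x y)
    {x : EuclideanSpace ℝ (Fin n)} (hxA : x ∈ A)
    (hd : DifferentiableAt ℝ F x)
    (hdens : Tendsto
      (fun r => volume (A ∩ closedBall x r) / volume (closedBall x r)) (𝓝[>] 0) (𝓝 1))
    {v : EuclideanSpace ℝ (Fin n)} (hv : ‖v‖ = 1) :
    1 - ε ≤ ‖fderiv ℝ F x v‖ ∧ ‖fderiv ℝ F x v‖ ≤ 1 + ε := by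
  set L := fderiv ℝ F x with hL
  set M := ‖L‖ with hM
  have hM0 : 0 ≤ M := norm_nonneg _
  have key : ∀ δ ∈ Set.Ioo (0:ℝ) 1,
      1 - ε - (4 + M) * δ ≤ ‖L v‖ ∧ ‖L v‖ ≤ 1 + ε + (4 + M) * δ := by
    intro δ ⟨hδ0, hδ1⟩
    -- little-o estimate
    have hlo := hd.hasFDerivAt.isLittleO
    have hev := hlo.def hδ0
    rw [Metric.eventually_nhds_iff] at hev
    obtain ⟨ρ, hρ0, hρ⟩ := hev
    -- choose a suitable small radius
    have hball := aux_density_nonempty hdens hv hδ0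
    have hsmall : ∀ᶠ r in 𝓝[>] (0:ℝ), r ∈ Set.Ioo (0:ℝ) (ρ/2) := by
      filter_upwards [Ioo_mem_nhdsGT_of_mem (Set.left_mem_Ico.2 (half_pos hρ0))] with r hr
      exact hr
    obtain ⟨r, ⟨⟨a, haA, ha⟩, hr0, hrρ⟩⟩ := (hball.and hsmall).exists
    rw [mem_closedBall] at ha
    set u := a - x with hu
    have hd1 : dist a (x + r • v) = ‖u - r • v‖ := by
      rw [dist_eq_norm]; congr 1; rw [hu]; abel
    have hrv : ‖r • v‖ = r := by rw [norm_smul, hv, Real.norm_eq_abs, abs_of_pos hr0, mul_one]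
    have h1 : ‖u - r • v‖ ≤ δ * r := by rw [← hd1]; exact ha
    have hu_le : ‖u‖ ≤ r + δ * r := by
      calc ‖u‖ = ‖(u - r • v) + r • v‖ := by congr 1; abel
        _ ≤ ‖u - r • v‖ + ‖r • v‖ := norm_add_le _ _
        _ ≤ δ * r + r := add_le_add h1 hrv.le
        _ = r + δ * r := by ring
    have hu_ge : r - δ * r ≤ ‖u‖ := by
      have : ‖r • v‖ ≤ ‖r • v - u‖ + ‖u‖ := by
        calc ‖r • v‖ = ‖(r • v - u) + u‖ := by congr 1; abel
          _ ≤ _ := norm_add_le _ _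
      rw [hrv, norm_sub_rev] at this
      linarith [h1]
    have hdax : dist a x = ‖u‖ := dist_eq_norm a x
    have hdaxρ : dist a x < ρ := by
      rw [hdax]; calc ‖u‖ ≤ r + δ * r := hu_le
        _ < 2 * r := by nlinarith
        _ < ρ := by linarith [hrρ]
    have herr : ‖F a - F x - L u‖ ≤ δ * ‖u‖ := by
      have := hρ hdaxρ
      simpa [hu] using this
    have hLvu : ‖L (u - r • v)‖ ≤ M * (δ * r) :=
      (L.le_opNorm _).trans (by exact mul_le_mul_of_nonneg_left h1 hM0)
    have hsplit : (r : ℝ) • L v = L u - L (u - r • v) := by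
      rw [← L.map_smul]; rw [← L.map_sub]; congr 1; abel
    have hrLv : ‖(r : ℝ) • L v‖ = r * ‖L v‖ := by
      rw [norm_smul, Real.norm_eq_abs, abs_of_pos hr0]
    have hFax : ‖F a - F x‖ = dist (F a) (F x) := (dist_eq_norm _ _).symm
    obtain ⟨hlow, hup⟩ := hbi a haA x hxA
    -- upper bound
    have hLu_le : ‖L u‖ ≤ ‖F a - F x‖ + δ * ‖u‖ := by
      calc ‖L u‖ = ‖(F a - F x) - (F a - F x - L u)‖ := by congr 1; abel
        _ ≤ ‖F a - F x‖ + ‖F a - F x - L u‖ := norm_sub_le _ _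
        _ ≤ _ := by linarith [herr]
    have hLu_ge : ‖F a - F x‖ ≤ ‖L u‖ + δ * ‖u‖ := by
      calc ‖F a - F x‖ = ‖L u + (F a - F x - L u)‖ := by congr 1; abel
        _ ≤ ‖L u‖ + ‖F a - F x - L u‖ := norm_add_le _ _
        _ ≤ _ := by linarith [herr]
    have hup2 : r * ‖L v‖ ≤ ‖L u‖ + M * (δ * r) := by
      calc r * ‖L v‖ = ‖(r:ℝ) • L v‖ := hrLv.symm
        _ = ‖L u - L (u - r • v)‖ := by rw [hsplit]
        _ ≤ ‖L u‖ + ‖L (u - r • v)‖ := norm_sub_le _ _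
        _ ≤ _ := by linarith [hLvu]
    have hlow2 : ‖L u‖ ≤ r * ‖L v‖ + M * (δ * r) := by
      calc ‖L u‖ = ‖(r:ℝ) • L v + L (u - r • v)‖ := by rw [hsplit]; congr 1; abel
        _ ≤ ‖(r:ℝ) • L v‖ + ‖L (u - r • v)‖ := norm_add_le _ _
        _ ≤ _ := by rw [hrLv]; linarith [hLvu]
    have hFup : ‖F a - F x‖ ≤ (1 + ε) * ‖u‖ := by rw [hFax, ← hdax]; exact hup
    have hFlow : (1 - ε) * ‖u‖ ≤ ‖F a - F x‖ := by rw [hFax, ← hdax]; exact hlow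
    have hps1 : (0:ℝ) ≤ ε * (δ * r) := mul_nonneg hε.le (mul_nonneg hδ0.le hr0.le)
    have hps2 : (0:ℝ) ≤ (1 - δ) * δ * r :=
      mul_nonneg (mul_nonneg (by linarith) hδ0.le) hr0.le
    have hps3 : (0:ℝ) ≤ (1 - ε) * (δ * r) :=
      mul_nonneg (by linarith) (mul_nonneg hδ0.le hr0.le)
    constructor
    · -- lower bound on ‖L v‖
      rw [← mul_le_mul_iff_right₀ hr0]
      have e1 := mul_le_mul_of_nonneg_left hu_ge (by linarith : (0:ℝ) ≤ 1 - ε)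
      have e2 := mul_le_mul_of_nonneg_left hu_le hδ0.le
      linarith [hFlow, hLu_ge, hlow2, hps1, hps2, e1, e2]
    · rw [← mul_le_mul_iff_right₀ hr0]
      have e1 := mul_le_mul_of_nonneg_left hu_le (by linarith : (0:ℝ) ≤ 1 + ε)
      have e2 := mul_le_mul_of_nonneg_left hu_le hδ0.le
      linarith [hFup, hLu_le, hup2, hps1, hps2, hps3, e1, e2]
  have tendsU : Tendsto (fun δ : ℝ => 1 + ε + (4 + M) * δ) (𝓝[>] (0:ℝ)) (𝓝 (1 + ε)) := by
    have h := (show Continuous fun δ : ℝ => 1 + ε + (4 + M) * δ from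
      continuous_const.add (continuous_const.mul continuous_id)).tendsto 0
    simpa using h.mono_left nhdsWithin_le_nhds
  have tendsL : Tendsto (fun δ : ℝ => 1 - ε - (4 + M) * δ) (𝓝[>] (0:ℝ)) (𝓝 (1 - ε)) := by
    have h := (show Continuous fun δ : ℝ => 1 - ε - (4 + M) * δ from
      continuous_const.sub (continuous_const.mul continuous_id)).tendsto 0
    simpa using h.mono_left nhdsWithin_le_nhds
  have hevIoo : ∀ᶠ δ in 𝓝[>] (0:ℝ), δ ∈ Set.Ioo (0:ℝ) 1 := by
    filter_upwards [Ioo_mem_nhdsGT_of_mem (Set.left_mem_Ico.2 one_pos)] with δ hδ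
    exact hδ
  constructor
  · exact le_of_tendsto tendsL (hevIoo.mono fun δ hδ => (key δ hδ).1)
  · exact ge_of_tendsto tendsU (hevIoo.mono fun δ hδ => (key δ hδ).2)

lemma aux_polar {n k : ℕ} (L : EuclideanSpace ℝ (Fin n) →L[ℝ] EuclideanSpace ℝ (Fin k))
    {ε : ℝ} (hε : 0 < ε) (hε1 : ε ≤ 1)
    (hL : ∀ u : EuclideanSpace ℝ (Fin n), (1 - ε) * ‖u‖ ≤ ‖L u‖ ∧ ‖L u‖ ≤ (1 + ε) * ‖u‖)
    (v w : EuclideanSpace ℝ (Fin n)) :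
    |(inner ℝ (L v) (L w) : ℝ) - (inner ℝ v w : ℝ)| ≤ 3 * ε * ‖v‖ * ‖w‖ := by
  have sq : ∀ u : EuclideanSpace ℝ (Fin n), |‖L u‖ ^ 2 - ‖u‖ ^ 2| ≤ 3 * ε * ‖u‖ ^ 2 := by
    intro u
    obtain ⟨h1, h2⟩ := hL u
    have hn : (0:ℝ) ≤ ‖u‖ := norm_nonneg u
    have hn2 : (0:ℝ) ≤ ‖L u‖ := norm_nonneg (L u)
    have h0 : (0:ℝ) ≤ (1 - ε) * ‖u‖ := mul_nonneg (by linarith) hn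
    have h1' := mul_le_mul h1 h1 h0 hn2
    have h2' := mul_le_mul h2 h2 hn2 (by positivity)
    have h3 : (0:ℝ) ≤ (1 - ε) * ε * ‖u‖ ^ 2 :=
      mul_nonneg (mul_nonneg (by linarith) hε.le) (sq_nonneg _)
    have h4 : (0:ℝ) ≤ ε * ‖u‖ ^ 2 := mul_nonneg hε.le (sq_nonneg _)
    rw [abs_le]
    constructor
    · nlinarith [h1', h3, h4]
    · nlinarith [h2', h3, h4]
  -- unit vector case
  have unit_case : ∀ v w : EuclideanSpace ℝ (Fin n), ‖v‖ = 1 → ‖w‖ = 1 →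
      |(inner ℝ (L v) (L w) : ℝ) - (inner ℝ v w : ℝ)| ≤ 3 * ε := by
    intro v w hv hw
    have iK : (inner ℝ (L v) (L w) : ℝ) = (‖L v + L w‖ ^ 2 - ‖L v - L w‖ ^ 2) / 4 := by
      have h1 := norm_add_sq_real (L v) (L w)
      have h2 := norm_sub_sq_real (L v) (L w)
      linarith
    have iE : (inner ℝ v w : ℝ) = (‖v + w‖ ^ 2 - ‖v - w‖ ^ 2) / 4 := by
      have h1 := norm_add_sq_real v w
      have h2 := norm_sub_sq_real v w
      linarith
    have par : ‖v + w‖ ^ 2 + ‖v - w‖ ^ 2 = 4 := by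
      have h1 := norm_add_sq_real v w
      have h2 := norm_sub_sq_real v w
      rw [hv] at h1 h2; rw [hw] at h1 h2
      nlinarith
    have e1 : L v + L w = L (v + w) := (map_add L v w).symm
    have e2 : L v - L w = L (v - w) := (map_sub L v w).symm
    have s1 := abs_le.1 (sq (v + w))
    have s2 := abs_le.1 (sq (v - w))
    have hnn1 : (0:ℝ) ≤ ‖v + w‖ ^ 2 := sq_nonneg _
    have hnn2 : (0:ℝ) ≤ ‖v - w‖ ^ 2 := sq_nonneg _
    rw [iK, iE, e1, e2, abs_le]
    constructor
    · nlinarith [s1.1, s2.2, mul_nonneg hε.le hnn1, mul_nonneg hε.le hnn2]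
    · nlinarith [s1.2, s2.1, mul_nonneg hε.le hnn1, mul_nonneg hε.le hnn2]
  -- general case by homogeneity
  by_cases hv : v = 0
  · simp [hv]
  by_cases hw : w = 0
  · simp [hw]
  have hvn : (0:ℝ) < ‖v‖ := norm_pos_iff.2 hv
  have hwn : (0:ℝ) < ‖w‖ := norm_pos_iff.2 hw
  set v' := ‖v‖⁻¹ • v with hv'
  set w' := ‖w‖⁻¹ • w with hw'
  have hv'1 : ‖v'‖ = 1 := norm_smul_inv_norm hv
  have hw'1 : ‖w'‖ = 1 := norm_smul_inv_norm hw
  have hkey := unit_case v' w' hv'1 hw'1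
  have hvv : v = ‖v‖ • v' := by rw [hv', smul_smul, mul_inv_cancel₀ hvn.ne', one_smul]
  have hww : w = ‖w‖ • w' := by rw [hw', smul_smul, mul_inv_cancel₀ hwn.ne', one_smul]
  have hLv : L v = ‖v‖ • L v' := by conv_lhs => rw [hvv, L.map_smul]
  have hLw : L w = ‖w‖ • L w' := by conv_lhs => rw [hww, L.map_smul]
  have hinner1 : (inner ℝ (L v) (L w) : ℝ) = ‖v‖ * ‖w‖ * inner ℝ (L v') (L w') := by
    rw [hLv, hLw, real_inner_smul_left, real_inner_smul_right]
    ring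
  have hinner2 : (inner ℝ v w : ℝ) = ‖v‖ * ‖w‖ * inner ℝ v' w' := by
    conv_lhs => rw [hvv, hww]
    rw [real_inner_smul_left, real_inner_smul_right]
    ring
  rw [hinner1, hinner2, ← mul_sub, abs_mul, abs_of_pos (mul_pos hvn hwn)]
  calc ‖v‖ * ‖w‖ * |(inner ℝ (L v') (L w') : ℝ) - inner ℝ v' w'|
      ≤ ‖v‖ * ‖w‖ * (3 * ε) := by
        exact mul_le_mul_of_nonneg_left hkey (by positivity)
    _ = 3 * ε * ‖v‖ * ‖w‖ := by ring

/-- Let `A ⊆ ℝⁿ` be Borel, `ε ∈ (0,1)`, `f : A → ℝᵏ` a `(1±ε)`-bi-Lipschitz embedding, and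
`F : ℝⁿ → ℝᵏ` any Lipschitz map with `F|_A = f`. Then there is a constant `C > 0` depending
only on `n` such that for `ℒⁿ`-a.e. `x ∈ A` and all `v, w ∈ ℝⁿ`,
`|⟨DF(x) v, DF(x) w⟩ − ⟨v, w⟩| ≤ C ε ‖v‖ ‖w‖`. -/
theorem stmt5 (n : ℕ) : ∃ C : ℝ, 0 < C ∧
    ∀ (k : ℕ) (A : Set (EuclideanSpace ℝ (Fin n))), MeasurableSet A →
      ∀ ε ∈ Set.Ioo (0:ℝ) 1,
        ∀ F : EuclideanSpace ℝ (Fin n) → EuclideanSpace ℝ (Fin k),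
          (∃ K : ℝ≥0, LipschitzWith K F) →
          (∀ x ∈ A, ∀ y ∈ A, (1 - ε) * dist x y ≤ dist (F x) (F y) ∧
            dist (F x) (F y) ≤ (1 + ε) * dist x y) →
          ∀ᵐ x ∂(MeasureTheory.volume.restrict A),
            ∀ v w : EuclideanSpace ℝ (Fin n),
              |(inner ℝ (fderiv ℝ F x v) (fderiv ℝ F x w) : ℝ) - (inner ℝ v w : ℝ)| ≤
                C * ε * ‖v‖ * ‖w‖ := by
  refine ⟨3, by norm_num, ?_⟩
  intro k A hA ε hε F hFlip hbi
  obtain ⟨K, hK⟩ := hFlip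
  obtain ⟨hε0, hε1⟩ := hε
  have h1 : ∀ᵐ x ∂(volume : Measure (EuclideanSpace ℝ (Fin n))), DifferentiableAt ℝ F x :=
    hK.ae_differentiableAt
  have h2 := Besicovitch.ae_tendsto_measure_inter_div
    (volume : Measure (EuclideanSpace ℝ (Fin n))) A
  filter_upwards [ae_restrict_mem hA, ae_restrict_of_ae h1, h2] with x hxA hdiff hdens
  intro v w
  have hbounds : ∀ u : EuclideanSpace ℝ (Fin n),
      (1 - ε) * ‖u‖ ≤ ‖fderiv ℝ F x u‖ ∧ ‖fderiv ℝ F x u‖ ≤ (1 + ε) * ‖u‖ := by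
    intro u
    by_cases hu : u = 0
    · simp [hu]
    · have hun : (0:ℝ) < ‖u‖ := norm_pos_iff.2 hu
      have h1u : ‖(‖u‖⁻¹ • u)‖ = 1 := norm_smul_inv_norm hu
      obtain ⟨hl, hr⟩ := aux_deriv_bound hε0 hε1 hbi hxA hdiff hdens h1u
      have heq : fderiv ℝ F x u = ‖u‖ • fderiv ℝ F x (‖u‖⁻¹ • u) := by
        rw [← (fderiv ℝ F x).map_smul, smul_smul, mul_inv_cancel₀ hun.ne', one_smul]
      rw [heq, norm_smul, Real.norm_eq_abs, abs_of_pos hun]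
      constructor
      · calc (1 - ε) * ‖u‖ = ‖u‖ * (1 - ε) := by ring
          _ ≤ ‖u‖ * ‖fderiv ℝ F x (‖u‖⁻¹ • u)‖ := mul_le_mul_of_nonneg_left hl hun.le
      · calc ‖u‖ * ‖fderiv ℝ F x (‖u‖⁻¹ • u)‖ ≤ ‖u‖ * (1 + ε) :=
            mul_le_mul_of_nonneg_left hr hun.le
          _ = (1 + ε) * ‖u‖ := by ring
  exact aux_polar (fderiv ℝ F x) hε0 hε1.le hbounds v w
end

section
/- Let A ⊆ ℝⁿ be a Borel set, let f : A → ℝᵏ be a Lipschitz map, and let F : ℝⁿ → ℝᵏ be any Lipschitz map with F|_A = f. Then for ℒⁿ-a.e. x ∈ A, the local slope of f at x equals the operator norm of the derivative of the extension: Lip f(x) = ‖DF(x)‖_op. -/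
open Metric Set MeasureTheory
open scoped NNReal ENNReal

/-- The local slope at `x` of the restriction of `f` to `S`:
`Lip (f|_S)(x) = lim_{r→0⁺} sup { d(f(x), f(y))/d(x,y) : y ∈ S ∩ B_r(x), y ≠ x }`,
with value `0` if `x` is isolated in `S` (the supremum of the empty set in `ℝ≥0∞`). -/
noncomputable def localSlope {X Y : Type*} [MetricSpace X] [MetricSpace Y]
    (S : Set X) (f : X → Y) (x : X) : ℝ≥0∞ :=
  ⨅ (r : ℝ) (_ : 0 < r), ⨆ (y : X) (_ : y ∈ (S ∩ Metric.ball x r) \ {x}),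
    edist (f x) (f y) / edist x y

open Filter in
open scoped Topology in
lemma density_ball {n : ℕ} {A : Set (EuclideanSpace ℝ (Fin n))} {x : EuclideanSpace ℝ (Fin n)}
    (hd : Tendsto (fun r => volume (A ∩ closedBall x r) / volume (closedBall x r)) (𝓝[>] 0) (𝓝 1))
    {δ : ℝ} (hδ : 0 < δ) (v : EuclideanSpace ℝ (Fin n)) (hv : ‖v‖ = 1) :
    ∀ᶠ t in 𝓝[>] (0:ℝ), (A ∩ closedBall (x + t • v) (δ * t)).Nonempty := by
  set κ : ℝ := (δ / (1 + δ)) ^ n with hκdef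
  have hδ1 : (0:ℝ) < 1 + δ := by linarith
  have hκpos : 0 < κ := pow_pos (div_pos hδ hδ1) n
  have hκle : κ ≤ 1 := pow_le_one₀ (div_nonneg hδ.le hδ1.le) ((div_le_one hδ1).2 (by linarith))
  have hb : ENNReal.ofReal (1 - κ) < 1 := by
    rw [← ENNReal.ofReal_one]
    exact ENNReal.ofReal_lt_ofReal_iff_of_nonneg (by linarith) |>.2 (by linarith)
  have hev := hd.eventually (eventually_gt_nhds hb)
  have hmap : Tendsto (fun t : ℝ => (1 + δ) * t) (𝓝[>] 0) (𝓝[>] 0) := by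
    apply tendsto_nhdsWithin_of_tendsto_nhds_of_eventually_within
    · have h0 : Tendsto (fun t : ℝ => (1 + δ) * t) (𝓝 0) (𝓝 ((1 + δ) * 0)) :=
        (tendsto_id (α := ℝ)).const_mul _
      simpa using h0.mono_left nhdsWithin_le_nhds
    · filter_upwards [self_mem_nhdsWithin] with t ht
      exact mul_pos hδ1 ht
  filter_upwards [hmap.eventually hev, self_mem_nhdsWithin] with t hratio ht'
  have ht : (0:ℝ) < t := ht'
  by_contra hempty
  rw [Set.not_nonempty_iff_eq_empty] at hempty
  set R : ℝ := (1 + δ) * t with hRdef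
  have hR : 0 < R := mul_pos hδ1 ht
  set S := closedBall (x + t • v) (δ * t) with hSdef
  set B := closedBall x R with hBdef
  have hSB : S ⊆ B := by
    intro y hy
    simp only [hSdef, mem_closedBall] at hy ⊢
    have h1 : dist (x + t • v) x = t := by
      rw [dist_eq_norm]
      simp [norm_smul, hv, abs_of_pos ht]
    calc dist y x ≤ dist y (x + t • v) + dist (x + t • v) x := dist_triangle _ _ _
      _ ≤ δ * t + t := by rw [h1]; linarith [hy]
      _ = R := by ring
  have hdisj : Disjoint (A ∩ B) S :=
    Set.disjoint_left.mpr fun y hy hyS =>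
      (Set.eq_empty_iff_forall_notMem.mp hempty y) ⟨hy.1, hyS⟩
  have hunion : volume (A ∩ B) + volume S ≤ volume B := by
    rw [← measure_union hdisj measurableSet_closedBall]
    exact measure_mono (union_subset inter_subset_right hSB)
  have hvolS : volume S = ENNReal.ofReal (κ * R ^ n) * volume (ball (0:EuclideanSpace ℝ (Fin n)) 1) := by
    rw [hSdef, Measure.addHaar_closedBall _ _ (mul_pos hδ ht).le]
    congr 2
    rw [finrank_euclideanSpace_fin, hκdef, hRdef, ← mul_pow]
    congr 1
    field_simp
  have hvolB : volume B = ENNReal.ofReal (R ^ n) * volume (ball (0:EuclideanSpace ℝ (Fin n)) 1) := by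
    rw [hBdef, Measure.addHaar_closedBall _ _ hR.le, finrank_euclideanSpace_fin]
  have hsplit : volume B = ENNReal.ofReal ((1 - κ) * R ^ n) * volume (ball (0:EuclideanSpace ℝ (Fin n)) 1) + volume S := by
    rw [hvolS, hvolB, ← add_mul,
      ← ENNReal.ofReal_add (mul_nonneg (by linarith) (pow_nonneg hR.le n))
        (mul_nonneg hκpos.le (pow_nonneg hR.le n))]
    congr 2
    ring
  have hS_ne_top : volume S ≠ ⊤ := measure_closedBall_lt_top.ne
  have hAB_le : volume (A ∩ B) ≤ ENNReal.ofReal ((1 - κ) * R ^ n) * volume (ball (0:EuclideanSpace ℝ (Fin n)) 1) := by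
    rw [hsplit] at hunion
    exact (ENNReal.add_le_add_iff_right hS_ne_top).mp hunion
  have hfin : volume (A ∩ B) ≤ ENNReal.ofReal (1 - κ) * volume B := by
    rw [hvolB, ← mul_assoc, ← ENNReal.ofReal_mul (by linarith)]
    exact hAB_le
  exact absurd (hratio.trans_le (ENNReal.div_le_of_le_mul hfin)) (lt_irrefl _)

open Filter in
open scoped Topology in
set_option maxHeartbeats 2000000 in
lemma key_pointwise {n k : ℕ} {A : Set (EuclideanSpace ℝ (Fin n))}
    {F : EuclideanSpace ℝ (Fin n) → EuclideanSpace ℝ (Fin k)} {x : EuclideanSpace ℝ (Fin n)}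
    (hx : DifferentiableAt ℝ F x)
    (hd : Filter.Tendsto (fun r => volume (A ∩ closedBall x r) / volume (closedBall x r))
      (𝓝[>] (0:ℝ)) (𝓝 1)) :
    localSlope A F x = ENNReal.ofReal ‖fderiv ℝ F x‖ := by
  set D := fderiv ℝ F x with hDdef
  set M := ‖D‖ with hMdef
  have hM0 : 0 ≤ M := norm_nonneg _
  have hlittle : (fun y => F y - F x - D (y - x)) =o[𝓝 x] fun y => y - x :=
    hx.hasFDerivAt.isLittleO
  apply le_antisymm
  · -- upper bound
    refine ENNReal.le_of_forall_pos_le_add fun ε hε _ => ?_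
    have h1 := hlittle.def (show (0:ℝ) < ε from hε)
    rw [Metric.eventually_nhds_iff_ball] at h1
    obtain ⟨r, hr0, hr⟩ := h1
    refine le_trans (iInf₂_le r hr0) ?_
    refine iSup₂_le fun y hy => ?_
    obtain ⟨⟨hyA, hyb⟩, hyx⟩ := hy
    have hyx' : y ≠ x := by simpa using hyx
    have hne : edist x y ≠ 0 := by simp [hyx'.symm]
    rw [ENNReal.div_le_iff_le_mul (Or.inl hne) (Or.inl (edist_ne_top x y))]
    have hkey : dist (F x) (F y) ≤ (M + ε) * dist x y := by
      have h2 := hr y hyb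
      have h3 : ‖F y - F x‖ ≤ ‖D (y - x)‖ + ε * ‖y - x‖ := by
        have h4 : ‖F y - F x‖ - ‖D (y - x)‖ ≤ ‖F y - F x - D (y - x)‖ := norm_sub_norm_le _ _
        linarith
      have h5 : ‖D (y - x)‖ ≤ M * ‖y - x‖ := D.le_opNorm _
      calc dist (F x) (F y) = ‖F y - F x‖ := by rw [dist_comm, dist_eq_norm]
        _ ≤ M * ‖y - x‖ + ε * ‖y - x‖ := by linarith
        _ = (M + ε) * dist x y := by rw [dist_comm, dist_eq_norm]; ring
    calc edist (F x) (F y) = ENNReal.ofReal (dist (F x) (F y)) := edist_dist _ _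
      _ ≤ ENNReal.ofReal ((M + ε) * dist x y) := ENNReal.ofReal_le_ofReal hkey
      _ = ENNReal.ofReal (M + ε) * ENNReal.ofReal (dist x y) :=
          ENNReal.ofReal_mul (by positivity)
      _ = (ENNReal.ofReal M + ε) * edist x y := by
          rw [ENNReal.ofReal_add hM0 ε.coe_nonneg, ENNReal.ofReal_coe_nnreal, edist_dist]
  · -- lower bound
    refine le_iInf₂ fun r hr => ?_
    have claim : ∀ c : ℝ, 0 ≤ c → c < M →
        ENNReal.ofReal c ≤ ⨆ (y : EuclideanSpace ℝ (Fin n))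
          (_ : y ∈ (A ∩ Metric.ball x r) \ {x}), edist (F x) (F y) / edist x y := by
      intro c hc hcM
      set gap := M - c with hgapdef
      have hgap : 0 < gap := by rw [hgapdef]; linarith
      have hgapM : gap ≤ M := by rw [hgapdef]; linarith
      have hMpos : 0 < M := lt_of_le_of_lt hc hcM
      -- choose a near-maximizing unit vector
      obtain ⟨u, hu1, hu2⟩ := D.exists_lt_apply_of_lt_opNorm
        (show M - gap/4 < ‖D‖ by rw [← hMdef]; linarith)
      have hDu : 0 < ‖D u‖ := by linarith
      have hu0 : u ≠ 0 := by
        intro h; rw [h] at hDu; simp at hDu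
      have hun : 0 < ‖u‖ := norm_pos_iff.mpr hu0
      set v := ‖u‖⁻¹ • u with hvdef
      have hv : ‖v‖ = 1 := by
        rw [hvdef, norm_smul, norm_inv, norm_norm, inv_mul_cancel₀ hun.ne']
      have hDv : M - gap/4 ≤ ‖D v‖ := by
        have : ‖D v‖ = ‖u‖⁻¹ * ‖D u‖ := by
          rw [hvdef, D.map_smul, norm_smul, norm_inv, norm_norm]
        rw [this]
        have h1 : (1:ℝ) ≤ ‖u‖⁻¹ := (one_le_inv₀ hun).mpr hu1.le
        nlinarith
      set δ := min (1/2 : ℝ) (gap / (8 * (M + 1))) with hδdef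
      have hδpos : 0 < δ := lt_min (by norm_num) (by positivity)
      have hδhalf : δ ≤ 1/2 := min_le_left _ _
      have hδM : δ * (8 * (M + 1)) ≤ gap := by
        have h1 : δ ≤ gap / (8 * (M + 1)) := min_le_right _ _
        rw [le_div_iff₀ (by positivity)] at h1
        exact h1
      -- the little-o bound with ε' = gap/8
      have h1 := hlittle.def (show (0:ℝ) < gap/8 by positivity)
      rw [Metric.eventually_nhds_iff_ball] at h1
      obtain ⟨r₀, hr₀0, hr₀⟩ := h1
      -- eventual facts about t
      have hmap : Filter.Tendsto (fun t : ℝ => (1 + δ) * t) (𝓝[>] 0) (𝓝 0) := by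
        have h0 : Filter.Tendsto (fun t : ℝ => (1 + δ) * t) (𝓝 0) (𝓝 ((1 + δ) * 0)) :=
          (tendsto_id (α := ℝ)).const_mul _
        simpa using h0.mono_left nhdsWithin_le_nhds
      have hev1 : ∀ᶠ t in 𝓝[>] (0:ℝ), (1 + δ) * t < min r r₀ :=
        hmap.eventually (eventually_lt_nhds (lt_min hr hr₀0))
      have hev2 := density_ball hd hδpos v hv
      obtain ⟨t, ht1, hne2, htpos⟩ :=
        (hev1.and (hev2.and self_mem_nhdsWithin)).exists
      have ht : (0:ℝ) < t := htpos
      obtain ⟨y, hyA, hyS⟩ := hne2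
      -- basic norm facts
      have hdyv : ‖y - x - t • v‖ ≤ δ * t := by
        have := mem_closedBall.mp hyS
        rw [dist_eq_norm] at this
        rw [sub_sub]
        exact this
      have htv : ‖t • v‖ = t := by rw [norm_smul, hv, Real.norm_eq_abs, abs_of_pos ht, mul_one]
      have hyx_le : ‖y - x‖ ≤ (1 + δ) * t := by
        calc ‖y - x‖ = ‖(y - x - t • v) + t • v‖ := by congr 1; abel
          _ ≤ ‖y - x - t • v‖ + ‖t • v‖ := norm_add_le _ _
          _ ≤ δ * t + t := by rw [htv]; linarith
          _ = (1 + δ) * t := by ring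
      have hyx_ge : (1 - δ) * t ≤ ‖y - x‖ := by
        have : ‖t • v‖ - ‖y - x - t • v‖ ≤ ‖y - x‖ := by
          have h := norm_sub_norm_le (t • v) (t • v - (y - x))
          have e1 : t • v - (t • v - (y - x)) = y - x := by abel
          have e2 : ‖t • v - (y - x)‖ = ‖y - x - t • v‖ := by rw [← norm_neg]; congr 1; abel
          rw [e1, e2] at h
          linarith
        rw [htv] at this
        linarith [hdyv]
      have hyne : y ≠ x := by
        intro h
        rw [h] at hyx_ge
        simp only [sub_self, norm_zero] at hyx_ge
        nlinarith [mul_pos (show (0:ℝ) < 1 - δ by linarith) ht]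
      have hyball : y ∈ Metric.ball x r := by
        rw [mem_ball, dist_eq_norm]
        calc ‖y - x‖ ≤ (1 + δ) * t := hyx_le
          _ < min r r₀ := ht1
          _ ≤ r := min_le_left _ _
      have hyball₀ : y ∈ Metric.ball x r₀ := by
        rw [mem_ball, dist_eq_norm]
        calc ‖y - x‖ ≤ (1 + δ) * t := hyx_le
          _ < min r r₀ := ht1
          _ ≤ r₀ := min_le_right _ _
      -- main real inequality
      have hmain : c * ‖y - x‖ ≤ ‖F y - F x‖ := by
        have h2 := hr₀ y hyball₀
        have hn1 : ‖D (y - x)‖ - gap/8 * ‖y - x‖ ≤ ‖F y - F x‖ := by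
          have h4 : ‖D (y - x)‖ ≤ ‖F y - F x‖ + ‖F y - F x - D (y - x)‖ := by
            have h := norm_sub_le (F y - F x) (F y - F x - D (y - x))
            have e1 : F y - F x - (F y - F x - D (y - x)) = D (y - x) := by abel
            rw [e1] at h
            exact h
          linarith
        have hn2 : t * ‖D v‖ - M * (δ * t) ≤ ‖D (y - x)‖ := by
          have e1 : D (y - x) = D (t • v) + D (y - x - t • v) := by
            rw [← D.map_add]; congr 1; abel
          have h5 : ‖D (y - x - t • v)‖ ≤ M * (δ * t) := by
            calc ‖D (y - x - t • v)‖ ≤ M * ‖y - x - t • v‖ := D.le_opNorm _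
              _ ≤ M * (δ * t) := by nlinarith
          have h6 : ‖D (t • v)‖ = t * ‖D v‖ := by
            rw [D.map_smul, norm_smul, Real.norm_eq_abs, abs_of_pos ht]
          have h7 : ‖D (t • v)‖ ≤ ‖D (y - x)‖ + ‖D (y - x - t • v)‖ := by
            have h := norm_sub_le (D (t • v) + D (y - x - t • v)) (D (y - x - t • v))
            rw [add_sub_cancel_right] at h
            rw [e1]
            exact h
          linarith
        -- combine
        nlinarith [mul_le_mul_of_nonneg_left hyx_le hc,
          mul_le_mul_of_nonneg_left hDv ht.le,
          mul_le_mul_of_nonneg_left hyx_le (by positivity : (0:ℝ) ≤ gap/8),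
          mul_le_mul_of_nonneg_right hδM ht.le, mul_pos hδpos ht, hgapM]
      -- conclude in ENNReal
      have hmem : y ∈ (A ∩ Metric.ball x r) \ {x} := ⟨⟨hyA, hyball⟩, by simpa using hyne⟩
      refine le_trans ?_ (le_iSup₂ y hmem)
      have hne : edist x y ≠ 0 := by simp [hyne.symm]
      rw [ENNReal.le_div_iff_mul_le (Or.inl hne) (Or.inl (edist_ne_top x y))]
      calc ENNReal.ofReal c * edist x y
          = ENNReal.ofReal c * ENNReal.ofReal (dist x y) := by rw [edist_dist]
        _ = ENNReal.ofReal (c * dist x y) := (ENNReal.ofReal_mul hc).symm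
        _ ≤ ENNReal.ofReal (dist (F x) (F y)) := by
            apply ENNReal.ofReal_le_ofReal
            rw [dist_comm x y, dist_eq_norm, dist_comm (F x) (F y), dist_eq_norm]
            exact hmain
        _ = edist (F x) (F y) := (edist_dist _ _).symm
    refine ENNReal.le_of_forall_pos_le_add fun ε hε hlt => ?_
    by_cases hMε : M ≤ ε
    · calc ENNReal.ofReal M ≤ ENNReal.ofReal ε := ENNReal.ofReal_le_ofReal hMε
        _ = (ε : ℝ≥0∞) := ENNReal.ofReal_coe_nnreal
        _ ≤ _ + ε := le_add_self
    · push_neg at hMε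
      have h := claim (M - ε) (by linarith [hMε.le]) (by
        have : (0:ℝ) < ε := hε
        linarith)
      rw [ENNReal.ofReal_sub _ ε.coe_nonneg, ENNReal.ofReal_coe_nnreal] at h
      exact tsub_le_iff_right.mp h

open Filter in
open scoped Topology in
/-- Let `A ⊆ ℝⁿ` be Borel, `f : A → ℝᵏ` Lipschitz, and `F : ℝⁿ → ℝᵏ` any Lipschitz map with
`F|_A = f`. Then for `ℒⁿ`-a.e. `x ∈ A`, the local slope of `f` at `x` equals the operator
norm of the derivative of the extension: `Lip f(x) = ‖DF(x)‖_op`. -/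
theorem stmt6 (n k : ℕ) (A : Set (EuclideanSpace ℝ (Fin n))) (hA : MeasurableSet A)
    (F : EuclideanSpace ℝ (Fin n) → EuclideanSpace ℝ (Fin k))
    (hF : ∃ K : ℝ≥0, LipschitzWith K F) :
    ∀ᵐ x ∂(MeasureTheory.volume.restrict A),
      localSlope A F x = ENNReal.ofReal ‖fderiv ℝ F x‖ := by
  obtain ⟨K, hK⟩ := hF
  have hdiff : ∀ᵐ x ∂(MeasureTheory.volume.restrict A), DifferentiableAt ℝ F x :=
    ae_restrict_of_ae hK.ae_differentiableAt
  have hdens0 := Besicovitch.ae_tendsto_measure_inter_div_of_measurableSet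
    (volume : Measure (EuclideanSpace ℝ (Fin n))) hA
  have hdens : ∀ᵐ x ∂(MeasureTheory.volume.restrict A),
      Tendsto (fun r => volume (A ∩ closedBall x r) / volume (closedBall x r))
        (𝓝[>] 0) (𝓝 1) := by
    filter_upwards [ae_restrict_of_ae hdens0, ae_restrict_mem hA] with x hx hxA
    simpa [Set.indicator_of_mem hxA] using hx
  filter_upwards [hdiff, hdens] with x hx1 hx2
  exact key_pointwise hx1 hx2
end

section
/- Let f : ℝⁿ → ℝᵐ be a Lipschitz map and let x ∈ ℝⁿ be a point at which f is differentiable. Then lim_{r→0⁺} (1/ℒⁿ(B_r(x))) ∫_{B_r(x)} ‖f(y) − f(x)‖²/r² dℒⁿ(y) = ‖Df(x)‖_HS²/(n+2). -/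
open Metric MeasureTheory Filter Topology
open scoped NNReal

variable {n : ℕ}

local notation "E" n => EuclideanSpace ℝ (Fin n)

-- change of variables by a linear isometry equiv preserving unit ball
lemma iso_setIntegral (e : (E n) ≃ₗᵢ[ℝ] (E n)) (g : (E n) → ℝ) :
    ∫ v in ball (0:E n) 1, g (e v) = ∫ v in ball (0:E n) 1, g v := by
  have h : e ⁻¹' (ball (0:E n) 1) = ball (0:E n) 1 := by
    ext v
    simp [mem_ball_zero_iff, e.norm_map]
  have h2 := e.measurePreserving.setIntegral_preimage_emb e.toHomeomorph.measurableEmbedding g (ball (0:E n) 1)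
  rwa [h] at h2

lemma mom_off {i j : Fin n} (hij : i ≠ j) :
    ∫ v in ball (0:E n) 1, v i * v j = 0 := by
  classical
  set e : (E n) ≃ₗᵢ[ℝ] (E n) :=
    LinearIsometryEquiv.piLpCongrRight 2
      (fun k => if k = i then LinearIsometryEquiv.neg ℝ else LinearIsometryEquiv.refl ℝ ℝ) with he
  have happ : ∀ (v : E n) (k : Fin n), e v k = if k = i then -(v k) else v k := by
    intro v k
    simp [he, LinearIsometryEquiv.piLpCongrRight]
    split <;> simp
  have h := iso_setIntegral e (fun v => v i * v j)
  simp only [happ, if_pos rfl, if_neg hij.symm, if_true] at h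
  have : ∫ v in ball (0:E n) 1, -(v i) * v j = - ∫ v in ball (0:E n) 1, v i * v j := by
    rw [← integral_neg]; congr 1; ext v; ring
  rw [this] at h
  linarith

lemma mom_diag_eq (i j : Fin n) :
    ∫ v in ball (0:E n) 1, (v i)^2 = ∫ v in ball (0:E n) 1, (v j)^2 := by
  classical
  set e : (E n) ≃ₗᵢ[ℝ] (E n) := LinearIsometryEquiv.piLpCongrLeft 2 ℝ ℝ (Equiv.swap i j) with he
  have happ : ∀ (v : E n), e v i = v j := by
    intro v
    simp [he, LinearIsometryEquiv.piLpCongrLeft_apply, Equiv.piCongrLeft'_apply,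
      Equiv.symm_swap, Equiv.swap_apply_left]
  have h := iso_setIntegral e (fun v => (v i)^2)
  simp only [happ] at h
  exact h.symm

-- continuity of coordinates
lemma cont_coord (i : Fin n) : Continuous fun v : E n => v i :=
  (EuclideanSpace.proj i).continuous

lemma integrableOn_ball_of_continuous {g : (E n) → ℝ} (hg : Continuous g) (x : E n) (r : ℝ) :
    IntegrableOn g (ball x r) volume :=
  (hg.continuousOn.integrableOn_compact (isCompact_closedBall x r)).mono_set
    ball_subset_closedBall

lemma norm_sq_integral (hn : 0 < n) :
    ∫ v in ball (0:E n) 1, ‖v‖^2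
      = (n : ℝ) / ((n : ℝ) + 2) * (volume (ball (0:E n) 1)).toReal := by
  haveI : Nonempty (Fin n) := ⟨⟨0, hn⟩⟩
  haveI : Nontrivial (E n) := by
    refine nontrivial_of_ne 0 (EuclideanSpace.single ⟨0, hn⟩ 1) ?_
    intro h
    have := congrFun (congrArg (fun v : E n => (v : Fin n → ℝ)) h) ⟨0, hn⟩
    simp [EuclideanSpace.single_apply] at this
  have hdim : Module.finrank ℝ (E n) = n := finrank_euclideanSpace_fin
  set f : ℝ → ℝ := fun t => if t < 1 then t^2 else 0 with hfdef
  have key := integral_fun_norm_addHaar (volume : Measure (E n)) f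
  rw [hdim] at key
  have lhs : (∫ x : E n, f ‖x‖) = ∫ v in ball (0:E n) 1, ‖v‖^2 := by
    rw [← integral_indicator measurableSet_ball]
    congr 1
    funext v
    by_cases h : ‖v‖ < 1
    · simp [hfdef, Set.indicator, mem_ball_zero_iff, h]
    · simp [hfdef, Set.indicator, mem_ball_zero_iff, h]
  have rhs1 : (∫ y in Set.Ioi (0:ℝ), y ^ (n - 1) • f y) = ∫ y in Set.Ioo (0:ℝ) 1, y^(n+1) := by
    have step1 : (∫ y in Set.Ioi (0:ℝ), y ^ (n - 1) • f y)
        = ∫ y in Set.Ioi (0:ℝ), Set.indicator (Set.Iio 1) (fun y => y^(n+1)) y := by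
      refine setIntegral_congr_fun measurableSet_Ioi ?_
      intro y hy
      simp only [Set.mem_Ioi] at hy
      by_cases h : y < 1
      · simp only [hfdef, smul_eq_mul, if_pos h, Set.indicator_of_mem (Set.mem_Iio.mpr h)]
        rw [← pow_add]
        congr 1
        omega
      · rw [Set.indicator_of_notMem (by simpa using h)]
        simp [hfdef, if_neg h]
    rw [step1, integral_indicator measurableSet_Iio, Measure.restrict_restrict measurableSet_Iio,
      Set.Iio_inter_Ioi]
  have rhs2 : (∫ y in Set.Ioo (0:ℝ) 1, y^(n+1)) = 1 / ((n:ℝ) + 2) := by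
    rw [← integral_Ioc_eq_integral_Ioo, ← intervalIntegral.integral_of_le zero_le_one,
      integral_pow]
    push_cast
    ring
  rw [lhs, rhs1, rhs2] at key
  rw [key, nsmul_eq_mul, smul_eq_mul]
  simp only [measureReal_def]
  ring

lemma norm_sq_eq_sum (v : E n) : ‖v‖^2 = ∑ j, (v j)^2 := by
  rw [EuclideanSpace.norm_eq, Real.sq_sqrt (by positivity)]
  simp [Real.norm_eq_abs, sq_abs]

lemma mom_diag (i : Fin n) :
    ∫ v in ball (0:E n) 1, (v i)^2 = (volume (ball (0:E n) 1)).toReal / ((n:ℝ) + 2) := by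
  have hn : 0 < n := i.pos
  have hint : ∀ j : Fin n, IntegrableOn (fun v : E n => (v j)^2) (ball (0:E n) 1) volume :=
    fun j => integrableOn_ball_of_continuous ((cont_coord j).pow 2) _ _
  have hsum : (∑ j : Fin n, ∫ v in ball (0:E n) 1, (v j)^2)
      = ∫ v in ball (0:E n) 1, ‖v‖^2 := by
    rw [← integral_finset_sum _ (fun j _ => hint j)]
    refine setIntegral_congr_fun measurableSet_ball ?_
    intro v _
    exact (norm_sq_eq_sum v).symm
  have hconst : (∑ j : Fin n, ∫ v in ball (0:E n) 1, (v j)^2)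
      = (n : ℝ) * ∫ v in ball (0:E n) 1, (v i)^2 := by
    rw [Finset.sum_congr rfl (fun j _ => mom_diag_eq j i), Finset.sum_const]
    simp [mul_comm]
  rw [hconst, norm_sq_integral hn] at hsum
  have hn' : (n : ℝ) ≠ 0 := Nat.cast_ne_zero.mpr hn.ne'
  have h2 : ((n:ℝ) + 2) ≠ 0 := by positivity
  refine mul_right_cancel₀ hn' ?_
  rw [mul_comm _ ((n:ℝ)), hsum]
  field_simp

lemma linmap_integral {m : ℕ} (T : (E n) →L[ℝ] EuclideanSpace ℝ (Fin m)) :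
    ∫ v in ball (0:E n) 1, ‖T v‖^2
      = (∑ i : Fin n, ‖T (EuclideanSpace.single i 1)‖^2) *
        ((volume (ball (0:E n) 1)).toReal / ((n:ℝ)+2)) := by
  classical
  set s : Fin n → EuclideanSpace ℝ (Fin m) := fun i => T (EuclideanSpace.single i 1) with hs
  set c : Fin n → Fin n → ℝ := fun i j => (inner ℝ (s i) (s j) : ℝ) with hc
  have hexp : ∀ v : E n, ‖T v‖^2 = ∑ i : Fin n, ∑ j : Fin n, c i j * (v i * v j) := by
    intro v
    have hTv : T v = ∑ i : Fin n, v i • s i := by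
      conv_lhs => rw [← (EuclideanSpace.basisFun (Fin n) ℝ).sum_repr v]
      rw [map_sum]
      simp [hs, EuclideanSpace.basisFun_apply, EuclideanSpace.basisFun_repr]
    rw [← real_inner_self_eq_norm_sq, hTv, sum_inner]
    refine Finset.sum_congr rfl fun i _ => ?_
    rw [inner_sum]
    refine Finset.sum_congr rfl fun j _ => ?_
    rw [real_inner_smul_left, real_inner_smul_right]
    ring
  have hcont : ∀ (i j : Fin n), IntegrableOn (fun v : E n => c i j * (v i * v j))
      (ball (0:E n) 1) volume := fun i j =>
    integrableOn_ball_of_continuous (continuous_const.mul ((cont_coord i).mul (cont_coord j))) _ _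
  have hij : ∀ i j : Fin n, (∫ v in ball (0:E n) 1, v i * v j)
      = if i = j then (volume (ball (0:E n) 1)).toReal / ((n:ℝ)+2) else 0 := by
    intro i j
    by_cases h : i = j
    · subst h
      rw [if_pos rfl, ← mom_diag i]
      simp_rw [sq]
    · rw [if_neg h]
      exact mom_off h
  calc ∫ v in ball (0:E n) 1, ‖T v‖^2
      = ∫ v in ball (0:E n) 1, ∑ i : Fin n, ∑ j : Fin n, c i j * (v i * v j) :=
        setIntegral_congr_fun measurableSet_ball (fun v _ => hexp v)
    _ = ∑ i : Fin n, ∑ j : Fin n, c i j * ∫ v in ball (0:E n) 1, v i * v j := by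
        rw [integral_finset_sum _ (fun i _ => integrable_finset_sum _ (fun j _ => hcont i j))]
        exact Finset.sum_congr rfl fun i _ => by
          rw [integral_finset_sum _ (fun j _ => hcont i j)]
          exact Finset.sum_congr rfl fun j _ => MeasureTheory.integral_const_mul _ _
    _ = ∑ i : Fin n, c i i * ((volume (ball (0:E n) 1)).toReal / ((n:ℝ)+2)) := by
        refine Finset.sum_congr rfl fun i _ => ?_
        simp_rw [hij, mul_ite, mul_zero]
        simp
    _ = (∑ i : Fin n, ‖s i‖^2) * ((volume (ball (0:E n) 1)).toReal / ((n:ℝ)+2)) := by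
        rw [Finset.sum_mul]
        exact Finset.sum_congr rfl fun i _ => by show (inner ℝ (s i) (s i) : ℝ) * _ = _; rw [real_inner_self_eq_norm_sq]

lemma lin_scaled {m : ℕ} (T : (E n) →L[ℝ] EuclideanSpace ℝ (Fin m)) (x : E n) {r : ℝ}
    (hr : 0 < r) :
    ∫ y in ball x r, ‖T (y - x)‖^2 = r^(n+2) * ∫ v in ball (0:E n) 1, ‖T v‖^2 := by
  set g : (E n) → ℝ := fun v => ‖T v‖^2 with hg
  have htrans : ∫ y in ball x r, g (y - x) = ∫ v in ball (0:E n) r, g v := by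
    rw [← integral_indicator measurableSet_ball, ← integral_indicator measurableSet_ball]
    have : ∀ y : E n, (ball x r).indicator (fun y => g (y - x)) y
        = (ball (0:E n) r).indicator g (y - x) := by
      intro y
      by_cases h : y ∈ ball x r
      · rw [Set.indicator_of_mem h, Set.indicator_of_mem]
        rwa [mem_ball_zero_iff, ← mem_ball_iff_norm]
      · rw [Set.indicator_of_notMem h, Set.indicator_of_notMem]
        rwa [mem_ball_zero_iff, ← mem_ball_iff_norm]
    simp_rw [this]
    exact integral_sub_right_eq_self ((ball (0:E n) r).indicator g) x
  have hscale : ∫ v in ball (0:E n) 1, g (r • v) = (r ^ n)⁻¹ • ∫ v in ball (0:E n) r, g v := by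
    have h := Measure.setIntegral_comp_smul_of_pos volume g (ball (0:E n) 1) hr
    rwa [smul_unitBall_of_pos hr, finrank_euclideanSpace_fin] at h
  have hsq : ∫ v in ball (0:E n) 1, g (r • v) = r^2 * ∫ v in ball (0:E n) 1, g v := by
    rw [← MeasureTheory.integral_const_mul]
    refine setIntegral_congr_fun measurableSet_ball fun v _ => ?_
    simp only [hg]
    rw [T.map_smul, norm_smul, Real.norm_eq_abs, abs_of_pos hr, mul_pow]
  have hrn : (r:ℝ)^n ≠ 0 := pow_ne_zero _ hr.ne'
  have key : (∫ v in ball (0:E n) r, g v) = r^n * (∫ v in ball (0:E n) 1, g (r • v)) := by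
    rw [hscale, smul_eq_mul, ← mul_assoc, mul_inv_cancel₀ hrn, one_mul]
  rw [htrans, key, hsq, pow_add]
  ring

lemma lin_avg {m : ℕ} (T : (E n) →L[ℝ] EuclideanSpace ℝ (Fin m)) (x : E n) {r : ℝ} (hr : 0 < r) :
    (volume (ball x r)).toReal⁻¹ * ∫ y in ball x r, ‖T (y - x)‖^2 / r^2
      = (∑ i : Fin n, ‖T (EuclideanSpace.single i 1)‖^2) / ((n:ℝ)+2) := by
  have hV1pos : 0 < (volume (ball (0:E n) 1)).toReal :=
    ENNReal.toReal_pos (measure_ball_pos volume 0 one_pos).ne' measure_ball_lt_top.ne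
  have hVxr : (volume (ball x r)).toReal = r^n * (volume (ball (0:E n) 1)).toReal := by
    rw [Measure.addHaar_ball_of_pos volume x hr, ENNReal.toReal_mul,
      ENNReal.toReal_ofReal (pow_nonneg hr.le _), finrank_euclideanSpace_fin]
  have hdiv : (∫ y in ball x r, ‖T (y - x)‖^2 / r^2)
      = (∫ y in ball x r, ‖T (y - x)‖^2) / r^2 := integral_div _ _
  rw [hdiv, lin_scaled T x hr, linmap_integral T, hVxr]
  have h1 : (0:ℝ) < (n:ℝ) + 2 := by positivity
  field_simp
  ring


/-- Let `f : ℝⁿ → ℝᵐ` be Lipschitz and differentiable at `x`. Then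
`lim_{r→0⁺} (1/ℒⁿ(B_r(x))) ∫_{B_r(x)} ‖f(y) − f(x)‖²/r² dℒⁿ(y) = ‖Df(x)‖_HS²/(n+2)`,
where `‖Df(x)‖_HS² = Σᵢ ‖Df(x) eᵢ‖²` for the standard orthonormal basis `(eᵢ)` of `ℝⁿ`. -/
theorem stmt8 (n m : ℕ) (K : ℝ≥0)
    (f : EuclideanSpace ℝ (Fin n) → EuclideanSpace ℝ (Fin m))
    (hf : LipschitzWith K f)
    (x : EuclideanSpace ℝ (Fin n)) (hx : DifferentiableAt ℝ f x) :
    Tendsto (fun r : ℝ =>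
        (volume (Metric.ball x r)).toReal⁻¹ *
          ∫ y in Metric.ball x r, ‖f y - f x‖ ^ 2 / r ^ 2 ∂volume)
      (𝓝[>] 0)
      (𝓝 ((∑ i : Fin n, ‖fderiv ℝ f x (EuclideanSpace.single i 1)‖ ^ 2) / ((n : ℝ) + 2))) := by
  set T := fderiv ℝ f x with hT
  rw [Metric.tendsto_nhdsWithin_nhds]
  intro ε hε
  set C := (K:ℝ) + ‖T‖ + 1 with hC
  have hCpos : 0 < C := by positivity
  set ε' := ε / (2*C) with hε'def
  have hε'pos : 0 < ε' := by positivity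
  have hlittle := hx.hasFDerivAt.isLittleO.def hε'pos
  rcases Metric.eventually_nhds_iff.mp hlittle with ⟨δ, hδpos, hδ⟩
  refine ⟨δ, hδpos, ?_⟩
  intro r hr hrd
  have hr0 : 0 < r := hr
  have hrδ : r < δ := by rwa [Real.dist_eq, sub_zero, abs_of_pos hr0] at hrd
  have hVpos : 0 < (volume (ball x r)).toReal :=
    ENNReal.toReal_pos (measure_ball_pos volume x hr0).ne' measure_ball_lt_top.ne
  -- pointwise bound
  have hbound : ∀ y ∈ ball x r,
      ‖‖f y - f x‖^2 / r^2 - ‖T (y - x)‖^2 / r^2‖ ≤ ε' * C := by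
    intro y hy
    have hyx : ‖y - x‖ < r := by rwa [mem_ball_iff_norm] at hy
    have hyx0 : 0 ≤ ‖y - x‖ := norm_nonneg _
    have h1 : ‖f y - f x - T (y - x)‖ ≤ ε' * ‖y - x‖ := by
      have := hδ (show dist y x < δ by
        rw [dist_eq_norm]; exact hyx.trans hrδ)
      simpa using this
    set a := ‖f y - f x‖ with ha
    set b := ‖T (y - x)‖ with hb
    have hab : |a - b| ≤ ε' * r := by
      refine le_trans (abs_norm_sub_norm_le _ _) (le_trans h1 ?_)
      exact mul_le_mul_of_nonneg_left hyx.le hε'pos.le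
    have haK : a ≤ (K:ℝ) * r := by
      have := hf.dist_le_mul y x
      rw [dist_eq_norm, dist_eq_norm] at this
      exact le_trans this (mul_le_mul_of_nonneg_left hyx.le K.coe_nonneg)
    have hbT : b ≤ ‖T‖ * r := by
      refine le_trans (T.le_opNorm _) ?_
      exact mul_le_mul_of_nonneg_left hyx.le (norm_nonneg T)
    have key : |a^2 - b^2| ≤ ε' * C * r^2 := by
      have hfac : a^2 - b^2 = (a - b) * (a + b) := by ring
      rw [hfac, abs_mul]
      have habs2 : |a + b| ≤ C * r := by
        rw [abs_of_nonneg (by positivity)]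
        have : (K:ℝ) * r + ‖T‖ * r ≤ C * r := by
          rw [hC]; nlinarith [hr0]
        linarith
      calc |a - b| * |a + b| ≤ (ε' * r) * (C * r) :=
            mul_le_mul hab habs2 (abs_nonneg _) (by positivity)
        _ = ε' * C * r^2 := by ring
    rw [Real.norm_eq_abs, div_sub_div_same, abs_div, abs_of_pos (by positivity : (0:ℝ) < r^2),
      div_le_iff₀ (by positivity : (0:ℝ) < r^2)]
    exact key
  -- integrability
  have hi1 : IntegrableOn (fun y => ‖f y - f x‖^2 / r^2) (ball x r) volume :=
    integrableOn_ball_of_continuous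
      (((hf.continuous.sub continuous_const).norm.pow 2).div_const _) _ _
  have hi2 : IntegrableOn (fun y : E n => ‖T (y - x)‖^2 / r^2) (ball x r) volume :=
    integrableOn_ball_of_continuous
      (((T.continuous.comp (continuous_id.sub continuous_const)).norm.pow 2).div_const _) _ _
  rw [Real.dist_eq]
  have hAL : ((volume (ball x r)).toReal⁻¹ * ∫ y in ball x r, ‖f y - f x‖^2 / r^2)
      - (∑ i : Fin n, ‖T (EuclideanSpace.single i 1)‖^2) / ((n:ℝ)+2)
      = (volume (ball x r)).toReal⁻¹ *
        ∫ y in ball x r, (‖f y - f x‖^2 / r^2 - ‖T (y - x)‖^2 / r^2) := by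
    rw [← lin_avg T x hr0, ← mul_sub, ← integral_sub hi1 hi2]
  rw [hAL, abs_mul, abs_of_nonneg (by positivity : (0:ℝ) ≤ (volume (ball x r)).toReal⁻¹)]
  have hInt : |∫ y in ball x r, (‖f y - f x‖^2 / r^2 - ‖T (y - x)‖^2 / r^2)|
      ≤ ε' * C * (volume (ball x r)).toReal := by
    have h0 := norm_setIntegral_le_of_norm_le_const (μ := volume) (s := ball x r)
      measure_ball_lt_top hbound
    rw [Real.norm_eq_abs, measureReal_def] at h0
    linarith [h0]
  have hstep : (volume (ball x r)).toReal⁻¹ *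
      |∫ y in ball x r, (‖f y - f x‖^2 / r^2 - ‖T (y - x)‖^2 / r^2)| ≤ ε' * C := by
    have h2 := mul_le_mul_of_nonneg_left hInt (inv_nonneg.mpr hVpos.le)
    have h3 : (volume (ball x r)).toReal⁻¹ * (ε' * C * (volume (ball x r)).toReal) = ε' * C := by
      field_simp
    linarith [h2, h3.le, h3.ge]
  have hfin : ε' * C = ε / 2 := by
    rw [hε'def]
    field_simp
  linarith [hstep, hfin]
end

section
/- There exists a constant C > 0 depending only on n with the following property. Let V be an n-dimensional real inner product space, let L : V × V → ℝ be a symmetric bilinear form, and set ‖L‖_B := sup_{‖u‖=1} |L(u, u)|. Let ε ∈ (0, 1/(2n)) and let v₁, …, vₙ ∈ V satisfy |⟨v_i, v_j⟩ − δ_{ij}| ≤ ε for all i, j. Then | sup_{a ∈ ℝⁿ, Σ_i a_i² = 1} |L(Σ_i a_i v_i, Σ_i a_i v_i)| − ‖L‖_B | ≤ C ‖L‖_B ε. -/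
open Set

universe u

lemma aux_est (n : ℕ) (ε : ℝ) (hε : 0 ≤ ε) (g : Fin n → Fin n → ℝ)
    (hg : ∀ i j, |g i j - (if i = j then 1 else 0)| ≤ ε) (b : Fin n → ℝ) :
    |(∑ i, ∑ j, b i * b j * g i j) - ∑ i, b i ^ 2| ≤ n * ε * ∑ i, b i ^ 2 := by
  have h0 : (∑ i, ∑ j, b i * b j * g i j) - ∑ i, b i ^ 2
      = ∑ i, ∑ j, b i * b j * (g i j - if i = j then 1 else 0) := by
    have h1 : ∀ i : Fin n, ∑ j, b i * b j * (if i = j then (1:ℝ) else 0) = b i ^ 2 := by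
      intro i
      simp [mul_ite, Finset.sum_ite_eq, pow_two]
    simp only [mul_sub, Finset.sum_sub_distrib, h1]
  rw [h0]
  calc |∑ i, ∑ j, b i * b j * (g i j - if i = j then 1 else 0)|
      ≤ ∑ i, ∑ j, |b i * b j * (g i j - if i = j then 1 else 0)| := by
        refine (Finset.abs_sum_le_sum_abs _ _).trans ?_
        exact Finset.sum_le_sum fun i _ => Finset.abs_sum_le_sum_abs _ _
    _ ≤ ∑ i, ∑ j, |b i| * |b j| * ε := by
        refine Finset.sum_le_sum fun i _ => Finset.sum_le_sum fun j _ => ?_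
        rw [abs_mul, abs_mul]
        exact mul_le_mul_of_nonneg_left (hg i j) (by positivity)
    _ = (∑ i, |b i|) ^ 2 * ε := by
        rw [pow_two, Finset.sum_mul_sum]
        simp [Finset.sum_mul]
    _ ≤ ((n : ℝ) * ∑ i, |b i| ^ 2) * ε := by
        refine mul_le_mul_of_nonneg_right ?_ hε
        simpa using sq_sum_le_card_mul_sum_sq (s := Finset.univ) (f := fun i => |b i|)
    _ = n * ε * ∑ i, b i ^ 2 := by
        simp only [sq_abs]; ring

/-- There is a constant `C > 0` depending only on `n` with the following property. For every
`n`-dimensional real inner product space `V`, every symmetric bilinear form `L : V × V → ℝ`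
with best bound `‖L‖_B = sup_{‖u‖=1} |L(u,u)|`, every `ε ∈ (0, 1/(2n))` and every family
`v₁, …, vₙ ∈ V` with `|⟨vᵢ, vⱼ⟩ − δᵢⱼ| ≤ ε`, one has
`| sup_{Σ aᵢ² = 1} |L(Σ aᵢ vᵢ, Σ aᵢ vᵢ)| − ‖L‖_B | ≤ C ‖L‖_B ε`. -/
theorem stmt10 (n : ℕ) : ∃ C : ℝ, 0 < C ∧
    ∀ (V : Type u) [NormedAddCommGroup V] [InnerProductSpace ℝ V],
      Module.finrank ℝ V = n →
      ∀ L : V →ₗ[ℝ] V →ₗ[ℝ] ℝ, (∀ u w : V, L u w = L w u) →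
      ∀ ε ∈ Set.Ioo (0:ℝ) (1 / (2 * n)),
      ∀ v : Fin n → V,
        (∀ i j : Fin n, |(inner ℝ (v i) (v j) : ℝ) - (if i = j then 1 else 0)| ≤ ε) →
        |sSup {x : ℝ | ∃ a : Fin n → ℝ, (∑ i, (a i) ^ 2) = 1 ∧
              x = |L (∑ i, a i • v i) (∑ i, a i • v i)|} -
            sSup {x : ℝ | ∃ u : V, ‖u‖ = 1 ∧ x = |L u u|}| ≤
          C * sSup {x : ℝ | ∃ u : V, ‖u‖ = 1 ∧ x = |L u u|} * ε := by
  refine ⟨(n : ℝ) + 1, by positivity, ?_⟩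
  intro V _ _ hdim L hsym ε hε v hv
  rcases Nat.eq_zero_or_pos n with hn | hn
  · exfalso
    subst hn
    have h1 := hε.1
    have h2 := hε.2
    norm_num at h2
    linarith
  -- basic numeric facts
  have hε0 : 0 < ε := hε.1
  have hn' : (0:ℝ) < n := by exact_mod_cast hn
  have hnε : (n:ℝ) * ε < 1/2 := by
    have h2 := hε.2
    rw [lt_div_iff₀ (by positivity)] at h2
    nlinarith
  have hnεnn : 0 ≤ (n:ℝ) * ε := by positivity
  set aS : Set ℝ := {x : ℝ | ∃ a : Fin n → ℝ, (∑ i, (a i) ^ 2) = 1 ∧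
      x = |L (∑ i, a i • v i) (∑ i, a i • v i)|} with haS_def
  set spS : Set ℝ := {x : ℝ | ∃ u : V, ‖u‖ = 1 ∧ x = |L u u|} with hspS_def
  -- norm expansion
  have hnorm : ∀ b : Fin n → ℝ,
      |‖∑ i, b i • v i‖^2 - ∑ i, b i ^ 2| ≤ (n:ℝ) * ε * ∑ i, b i ^ 2 := by
    intro b
    have hinner : ‖∑ i, b i • v i‖^2 = ∑ i, ∑ j, b i * b j * (inner ℝ (v i) (v j) : ℝ) := by
      rw [← real_inner_self_eq_norm_sq]
      simp only [inner_sum, sum_inner, real_inner_smul_left, real_inner_smul_right]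
      rw [Finset.sum_comm]
      exact Finset.sum_congr rfl fun i _ => Finset.sum_congr rfl fun j _ => by
        rw [real_inner_comm]; ring
    rw [hinner]
    exact aux_est n ε hε0.le _ hv b
  -- L scaling
  have hLsmul : ∀ (c : ℝ) (u : V), L (c • u) (c • u) = c^2 * L u u := by
    intro c u
    simp [map_smul, smul_eq_mul]
    ring
  -- L expansion
  have hL : ∀ b : Fin n → ℝ, L (∑ i, b i • v i) (∑ i, b i • v i)
      = ∑ i, ∑ j, b i * b j * L (v i) (v j) := by
    intro b
    simp only [map_sum, map_smul, LinearMap.sum_apply, LinearMap.smul_apply, smul_eq_mul,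
      Finset.mul_sum]
    rw [Finset.sum_comm]
    exact Finset.sum_congr rfl fun i _ => Finset.sum_congr rfl fun j _ => by ring
  -- aS nonempty
  have haS_ne : aS.Nonempty := by
    refine ⟨_, ⟨Pi.single ⟨0, hn⟩ 1, ?_, rfl⟩⟩
    simp [Pi.single_apply]
  -- aS bounded above
  have hbddaS : BddAbove aS := by
    refine ⟨∑ i, ∑ j, |L (v i) (v j)|, ?_⟩
    rintro x ⟨a, ha, rfl⟩
    have habs : ∀ i, |a i| ≤ 1 := by
      intro i
      have h1 : a i ^ 2 ≤ 1 := by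
        rw [← ha]
        exact Finset.single_le_sum (fun j _ => sq_nonneg (a j)) (Finset.mem_univ i)
      nlinarith [abs_nonneg (a i), sq_abs (a i)]
    rw [hL a]
    calc |∑ i, ∑ j, a i * a j * L (v i) (v j)|
        ≤ ∑ i, ∑ j, |a i * a j * L (v i) (v j)| := by
          refine (Finset.abs_sum_le_sum_abs _ _).trans ?_
          exact Finset.sum_le_sum fun i _ => Finset.abs_sum_le_sum_abs _ _
      _ ≤ ∑ i, ∑ j, |L (v i) (v j)| := by
          refine Finset.sum_le_sum fun i _ => Finset.sum_le_sum fun j _ => ?_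
          rw [abs_mul, abs_mul]
          exact mul_le_of_le_one_left (abs_nonneg _)
            (mul_le_one₀ (habs i) (abs_nonneg _) (habs j))
  have haS_nonneg : 0 ≤ sSup aS := by
    obtain ⟨x, a, ha, hx⟩ := haS_ne
    exact le_trans (hx ▸ abs_nonneg _) (le_csSup hbddaS ⟨a, ha, hx⟩)
  -- lower bound on norm
  have hpos : ∀ b : Fin n → ℝ,
      (1 - (n:ℝ)*ε) * ∑ i, b i ^ 2 ≤ ‖∑ i, b i • v i‖^2 := by
    intro b
    have h1 := abs_le.mp (hnorm b)
    have h2 : (0:ℝ) ≤ ∑ i, b i ^ 2 := Finset.sum_nonneg fun i _ => sq_nonneg _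
    nlinarith
  -- linear independence
  have hli : LinearIndependent ℝ v := by
    rw [Fintype.linearIndependent_iff]
    intro b hb i
    have h1 := hpos b
    rw [hb] at h1
    simp only [norm_zero, zero_pow, ne_eq, OfNat.ofNat_ne_zero, not_false_eq_true] at h1
    have h2 : (0:ℝ) ≤ ∑ i, b i ^ 2 := Finset.sum_nonneg fun i _ => sq_nonneg _
    have h3 : ∑ i, b i ^ 2 = 0 := by nlinarith
    have h4 := (Finset.sum_eq_zero_iff_of_nonneg (fun j _ => sq_nonneg (b j))).mp h3 i
      (Finset.mem_univ i)
    exact sq_eq_zero_iff.mp h4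
  -- finite dimensionality and basis
  have hfd : FiniteDimensional ℝ V := FiniteDimensional.of_finrank_pos (by rw [hdim]; exact hn)
  have hne : Nonempty (Fin n) := ⟨⟨0, hn⟩⟩
  let Bv : Module.Basis (Fin n) ℝ V :=
    basisOfLinearIndependentOfCardEqFinrank hli (by simp [hdim])
  have hBv : ∀ i, Bv i = v i := fun i => by
    rw [coe_basisOfLinearIndependentOfCardEqFinrank]
  have hrepr : ∀ u : V, ∑ i, Bv.repr u i • v i = u := by
    intro u
    have h := Bv.sum_repr u
    simpa only [hBv] using h
  -- every unit vector value is controlled by sSup aS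
  have hub : ∀ x ∈ spS, x ≤ (1/(1 - (n:ℝ)*ε)) * sSup aS := by
    rintro x ⟨u, hu, rfl⟩
    set b : Fin n → ℝ := fun i => Bv.repr u i with hb_def
    set t : ℝ := ∑ i, b i ^ 2 with ht_def
    have htnn : 0 ≤ t := Finset.sum_nonneg fun i _ => sq_nonneg _
    have hnb : |(1:ℝ) - t| ≤ (n:ℝ) * ε * t := by
      have h := hnorm b
      rw [hrepr u, hu] at h
      simpa using h
    have h2 := (abs_le.mp hnb).2
    have ht0 : 0 < t := by
      by_contra h
      push_neg at h
      have h3 : (n:ℝ) * ε * t ≤ 0 := mul_nonpos_of_nonneg_of_nonpos hnεnn h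
      linarith
    have hut : (1 - (n:ℝ)*ε) * t ≤ 1 := by
      have h := hpos b
      rw [hrepr u, hu] at h
      simpa using h
    set s : ℝ := Real.sqrt t with hs_def
    have hs0 : 0 < s := Real.sqrt_pos.mpr ht0
    have hs2 : s ^ 2 = t := Real.sq_sqrt htnn
    set a : Fin n → ℝ := fun i => b i / s with ha_def
    have hsum_a : ∑ i, a i ^ 2 = 1 := by
      simp only [ha_def, div_pow, ← Finset.sum_div, hs2]
      exact div_self ht0.ne'
    have hlin : ∑ i, a i • v i = s⁻¹ • u := by
      rw [← hrepr u, Finset.smul_sum]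
      exact Finset.sum_congr rfl fun i _ => by
        rw [smul_smul, ha_def]
        congr 1
        exact div_eq_inv_mul _ _
    have hmem : |L u u| / t ∈ aS := by
      refine ⟨a, hsum_a, ?_⟩
      rw [hlin, hLsmul]
      rw [abs_mul, abs_pow, abs_inv, abs_of_pos hs0, div_eq_mul_inv, mul_comm]
      congr 1
      rw [inv_pow, hs2]
    have hle : |L u u| / t ≤ sSup aS := le_csSup hbddaS hmem
    have h4 : |L u u| ≤ t * sSup aS := by
      rw [div_le_iff₀ ht0] at hle
      linarith [hle]
    have ht1 : t ≤ 1 / (1 - (n:ℝ)*ε) := by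
      rw [le_div_iff₀ (by linarith)]
      linarith [hut]
    calc |L u u| ≤ t * sSup aS := h4
      _ ≤ (1/(1 - (n:ℝ)*ε)) * sSup aS := mul_le_mul_of_nonneg_right ht1 haS_nonneg
  -- spS nonempty
  have hv0 : v ⟨0, hn⟩ ≠ 0 := by
    intro h
    have h1 := hv ⟨0, hn⟩ ⟨0, hn⟩
    rw [h] at h1
    simp at h1
    have hn1 : (1:ℝ) ≤ n := by exact_mod_cast hn
    nlinarith [hε0]
  have hspS_ne : spS.Nonempty :=
    ⟨_, ‖v ⟨0, hn⟩‖⁻¹ • v ⟨0, hn⟩, norm_smul_inv_norm hv0, rfl⟩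
  have hbddspS : BddAbove spS := ⟨_, hub⟩
  have hM0 : 0 ≤ sSup spS := by
    obtain ⟨x, u, hu, hx⟩ := hspS_ne
    exact le_trans (hx ▸ abs_nonneg _) (le_csSup hbddspS ⟨u, hu, hx⟩)
  have hMle : (1 - (n:ℝ)*ε) * sSup spS ≤ sSup aS := by
    have h := csSup_le hspS_ne hub
    rw [div_mul_eq_mul_div, le_div_iff₀ (by linarith)] at h
    linarith [h]
  -- |L u u| ≤ M ‖u‖²
  have hA : ∀ u : V, |L u u| ≤ sSup spS * ‖u‖^2 := by
    intro u
    by_cases hu : u = 0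
    · simp [hu]
    · set w : V := ‖u‖⁻¹ • u with hw_def
      have hw1 : ‖w‖ = 1 := norm_smul_inv_norm hu
      have hle : |L w w| ≤ sSup spS := le_csSup hbddspS ⟨w, hw1, rfl⟩
      have hun : (0:ℝ) < ‖u‖ := norm_pos_iff.mpr hu
      have heq : |L u u| = ‖u‖^2 * |L w w| := by
        rw [hw_def, hLsmul, abs_mul, abs_pow, abs_inv, abs_of_pos hun]
        field_simp
      rw [heq, mul_comm (sSup spS)]
      exact mul_le_mul_of_nonneg_left hle (by positivity)
  -- upper bound on aS
  have haSle : sSup aS ≤ sSup spS * (1 + (n:ℝ)*ε) := by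
    refine csSup_le haS_ne ?_
    rintro x ⟨a, ha, rfl⟩
    have h1 := hA (∑ i, a i • v i)
    have h2 : ‖∑ i, a i • v i‖^2 ≤ 1 + (n:ℝ)*ε := by
      have h := (abs_le.mp (hnorm a)).2
      rw [ha] at h
      linarith
    calc |L (∑ i, a i • v i) (∑ i, a i • v i)| ≤ sSup spS * ‖∑ i, a i • v i‖^2 := h1
      _ ≤ sSup spS * (1 + (n:ℝ)*ε) := mul_le_mul_of_nonneg_left h2 hM0
  -- conclude
  rw [abs_le]
  constructor
  · nlinarith [hMle, mul_nonneg hM0 hε0.le]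
  · nlinarith [haSle, mul_nonneg hM0 hε0.le]
end

section
/- Let Ω ⊆ ℝⁿ be a bounded open set, let f = (f₁, …, f_{k+1}) : Ω → 𝕊ᵏ be a Lipschitz map, and let φ = (φ₁, …, φ_{k+1}) : Ω → ℝ^{k+1} be a Lipschitz map with compact support contained in Ω. Then for all t ∈ ℝ with |t| sufficiently small, ‖f(x) + tφ(x)‖ > 0 for all x ∈ Ω, so f_t := (f + tφ)/‖f + tφ‖ is a well-defined Lipschitz map from Ω to 𝕊ᵏ; moreover the function t ↦ E(f_t) is differentiable at t = 0 with d/dt|_{t=0} E(f_t) = Σ_{i=1}^{k+1} ∫_Ω ⟨∇f_i(x), ∇(φ_i − f_i (f·φ))(x)⟩ dℒⁿ(x), where f·φ := Σ_{j=1}^{k+1} f_j φ_j. -/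
open Metric Set MeasureTheory Filter Topology
open scoped NNReal

/-- The Dirichlet energy of a map `g : Ω → ℝ^{k+1}`:
`E(g) = (1/2) ∫_Ω Σᵢ ‖∇gᵢ(x)‖² dℒⁿ(x)`. -/
noncomputable def dirichletEnergy {n k : ℕ} (Ω : Set (EuclideanSpace ℝ (Fin n)))
    (g : EuclideanSpace ℝ (Fin n) → EuclideanSpace ℝ (Fin (k + 1))) : ℝ :=
  (1 / 2) * ∫ x in Ω, ∑ i : Fin (k + 1), ‖gradient (fun y => g y i) x‖ ^ 2 ∂volume

open InnerProductSpace
open scoped RealInnerProductSpace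

namespace Stmt12Aux
variable {F : Type*} [NormedAddCommGroup F] [InnerProductSpace ℝ F] {m : ℕ}

noncomputable def Qf (u v : Fin m → ℝ) (t : ℝ) : ℝ := ∑ j, (u j + t * v j) ^ 2
noncomputable def Rf (u v : Fin m → ℝ) (t : ℝ) : ℝ := (Real.sqrt (Qf u v t))⁻¹
noncomputable def Sf (u v : Fin m → ℝ) (a b : Fin m → F) (t : ℝ) : F :=
  ∑ j, (2 * (u j + t * v j)) • (a j + t • b j)
noncomputable def Gf (u v : Fin m → ℝ) (a b : Fin m → F) (i : Fin m) (t : ℝ) : F :=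
  Rf u v t • (a i + t • b i) +
    ((u i + t * v i) * (-(1/2) * Rf u v t ^ 3)) • Sf u v a b t
noncomputable def Qd (u v : Fin m → ℝ) (t : ℝ) : ℝ := ∑ j, 2 * (u j + t * v j) * v j
noncomputable def Rd (u v : Fin m → ℝ) (t : ℝ) : ℝ := -(1/2) * Rf u v t ^ 3 * Qd u v t
noncomputable def Sd (u v : Fin m → ℝ) (a b : Fin m → F) (t : ℝ) : F :=
  ∑ j, ((2 * (u j + t * v j)) • b j + (2 * v j) • (a j + t • b j))
noncomputable def Gd (u v : Fin m → ℝ) (a b : Fin m → F) (i : Fin m) (t : ℝ) : F :=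
  Rd u v t • (a i + t • b i) + Rf u v t • b i +
    (v i * (-(1/2) * Rf u v t ^ 3) + (u i + t * v i) * (-(3/2) * Rf u v t ^ 2 * Rd u v t)) •
      Sf u v a b t +
    ((u i + t * v i) * (-(1/2) * Rf u v t ^ 3)) • Sd u v a b t
noncomputable def Fd (u v : Fin m → ℝ) (a b : Fin m → F) (t : ℝ) : ℝ :=
  ∑ i, (⟪Gf u v a b i t, Gd u v a b i t⟫_ℝ + ⟪Gd u v a b i t, Gf u v a b i t⟫_ℝ)

lemma sqrtinv_hasDerivAt {s : ℝ} (hs : 0 < s) :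
    HasDerivAt (fun r => (Real.sqrt r)⁻¹) (-(1/2) * (Real.sqrt s)⁻¹ ^ 3) s := by
  have h1 := Real.hasDerivAt_sqrt (ne_of_gt hs)
  have hssq : Real.sqrt s ≠ 0 := by positivity
  have h2 := h1.inv hssq
  refine h2.congr_deriv ?_
  have hx : Real.sqrt s ^ 2 = s := Real.sq_sqrt hs.le
  field_simp

lemma hasDerivAt_N (u v : Fin m → ℝ) (j : Fin m) (t : ℝ) :
    HasDerivAt (fun s => u j + s * v j) (v j) t := by
  simpa using ((hasDerivAt_id t).mul_const (v j)).const_add (u j)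

lemma hasDerivAt_g (a b : Fin m → F) (j : Fin m) (t : ℝ) :
    HasDerivAt (fun s => a j + s • b j) (b j) t := by
  simpa using ((hasDerivAt_id t).smul_const (b j)).const_add (a j)

lemma hasDerivAt_Q (u v : Fin m → ℝ) (t : ℝ) :
    HasDerivAt (fun s => Qf u v s) (Qd u v t) t := by
  unfold Qf Qd
  refine HasDerivAt.fun_sum fun j _ => ?_
  have h := (hasDerivAt_N u v j t).pow 2
  refine h.congr_deriv ?_
  push_cast
  ring

lemma hasDerivAt_R (u v : Fin m → ℝ) (t : ℝ) (h : 0 < Qf u v t) :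
    HasDerivAt (fun s => Rf u v s) (Rd u v t) t := by
  have := (sqrtinv_hasDerivAt h).comp t (hasDerivAt_Q u v t)
  unfold Rf Rd
  exact this

lemma hasDerivAt_S (u v : Fin m → ℝ) (a b : Fin m → F) (t : ℝ) :
    HasDerivAt (fun s => Sf u v a b s) (Sd u v a b t) t := by
  unfold Sf Sd
  refine HasDerivAt.fun_sum fun j _ => ?_
  exact ((hasDerivAt_N u v j t).const_mul 2).smul (hasDerivAt_g a b j t)

lemma hasDerivAt_G (u v : Fin m → ℝ) (a b : Fin m → F) (i : Fin m) (t : ℝ)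
    (h : 0 < Qf u v t) :
    HasDerivAt (fun s => Gf u v a b i s) (Gd u v a b i t) t := by
  have hR := hasDerivAt_R u v t h
  have hS := hasDerivAt_S u v a b t
  have hpart1 := hR.smul (hasDerivAt_g a b i t)
  have hcoef : HasDerivAt (fun s => (u i + s * v i) * (-(1/2) * Rf u v s ^ 3))
      (v i * (-(1/2) * Rf u v t ^ 3) + (u i + t * v i) * (-(3/2) * Rf u v t ^ 2 * Rd u v t)) t := by
    have h3 := ((hR.pow 3).const_mul (-(1/2)))
    have := (hasDerivAt_N u v i t).mul h3
    refine this.congr_deriv ?_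
    simp only [Pi.pow_apply]
    push_cast
    ring
  have hpart2 := hcoef.smul hS
  have := hpart1.add hpart2
  unfold Gf Gd
  refine this.congr_deriv ?_
  module

lemma hasDerivAt_F (u v : Fin m → ℝ) (a b : Fin m → F) (t : ℝ) (h : 0 < Qf u v t) :
    HasDerivAt (fun s => ∑ i, ‖Gf u v a b i s‖ ^ 2) (Fd u v a b t) t := by
  have : (fun s => ∑ i, ‖Gf u v a b i s‖ ^ 2)
      = fun s => ∑ i, ⟪Gf u v a b i s, Gf u v a b i s⟫_ℝ := by
    funext s
    exact Finset.sum_congr rfl fun i _ => (real_inner_self_eq_norm_sq _).symm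
  rw [this]
  unfold Fd
  exact HasDerivAt.fun_sum fun i _ =>
    (hasDerivAt_G u v a b i t h).inner ℝ (hasDerivAt_G u v a b i t h)

section zero
variable {u v : Fin m → ℝ} {a b : Fin m → F}

lemma Qf_zero_eq : Qf u v 0 = ∑ j, u j ^ 2 := by simp [Qf]

lemma Rf_zero (h1 : Qf u v 0 = 1) : Rf u v 0 = 1 := by
  rw [Rf, h1, Real.sqrt_one, inv_one]

lemma Sf_zero (h0 : ∑ j, u j • a j = (0:F)) : Sf u v a b 0 = 0 := by
  rw [Sf]
  have : ∀ j : Fin m, (2 * (u j + 0 * v j)) • (a j + (0:ℝ) • b j) = (2:ℝ) • (u j • a j) := by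
    intro j; module
  rw [Finset.sum_congr rfl fun j _ => this j, ← Finset.smul_sum, h0, smul_zero]

lemma Gf_zero (h1 : Qf u v 0 = 1) (h0 : ∑ j, u j • a j = (0:F)) (i : Fin m) :
    Gf u v a b i 0 = a i := by
  rw [Gf, Rf_zero h1, Sf_zero h0]
  module

lemma Rd_zero (h1 : Qf u v 0 = 1) : Rd u v 0 = -∑ j, u j * v j := by
  rw [Rd, Rf_zero h1, Qd, Finset.mul_sum, ← Finset.sum_neg_distrib]
  refine Finset.sum_congr rfl fun j _ => ?_
  ring

lemma Gd_zero (h1 : Qf u v 0 = 1) (h0 : ∑ j, u j • a j = (0:F)) (i : Fin m) :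
    Gd u v a b i 0 = b i - (∑ j, u j * v j) • a i - u i • (∑ j, (v j • a j + u j • b j)) := by
  rw [Gd, Rf_zero h1, Rd_zero h1, Sf_zero h0, Sd]
  have h2 : ((u i + 0 * v i) * (-(1/2) * (1:ℝ) ^ 3)) •
      (∑ j, ((2 * (u j + 0 * v j)) • b j + (2 * v j) • (a j + (0:ℝ) • b j)))
      = - (u i • (∑ j, (v j • a j + u j • b j))) := by
    rw [Finset.smul_sum, Finset.smul_sum, ← Finset.sum_neg_distrib]
    refine Finset.sum_congr rfl fun j _ => ?_
    module
  rw [h2]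
  module
end zero

section bound
variable (u v : Fin m → ℝ) (a b : Fin m → F)

lemma Rf_nonneg (t : ℝ) : 0 ≤ Rf u v t := by
  rw [Rf]; positivity

/-- crude global bound -/
noncomputable def Cb (m : ℕ) (M Ka Kb : ℝ) : ℝ :=
  let A := Ka + Kb
  let U := 1 + M
  let SB := m * (2 * U * A)
  let QdB := m * (2 * U * M)
  let RdB := 4 * QdB
  let SdB := m * (2 * U * Kb + 2 * M * A)
  let GB := 2 * A + 4 * U * SB
  let GdB := RdB * A + 2 * Kb + (4 * M + 6 * U * RdB) * SB + 4 * U * SdB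
  m * (2 * (GB * GdB))

set_option maxHeartbeats 1600000 in
lemma Fd_bound {M Ka Kb : ℝ} (hM : 0 ≤ M) (hKa : 0 ≤ Ka) (hKb : 0 ≤ Kb)
    (hu : ∀ j, |u j| ≤ 1) (hv : ∀ j, |v j| ≤ M) (ha : ∀ j, ‖a j‖ ≤ Ka)
    (hb : ∀ j, ‖b j‖ ≤ Kb) {t : ℝ} (ht : |t| ≤ 1) (hR : Rf u v t ≤ 2) :
    |Fd u v a b t| ≤ Cb m M Ka Kb := by
  set A := Ka + Kb with hA
  set U := 1 + M with hU
  set SB := (m : ℝ) * (2 * U * A) with hSB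
  set QdB := (m : ℝ) * (2 * U * M) with hQdB
  set RdB := 4 * QdB with hRdB
  set SdB := (m : ℝ) * (2 * U * Kb + 2 * M * A) with hSdB
  set GB := 2 * A + 4 * U * SB with hGB
  set GdB := RdB * A + 2 * Kb + (4 * M + 6 * U * RdB) * SB + 4 * U * SdB with hGdB
  have hR0 := Rf_nonneg u v t
  have hN : ∀ j, |u j + t * v j| ≤ U := fun j => by
    calc |u j + t * v j| ≤ |u j| + |t| * |v j| := by
          rw [← abs_mul]; exact abs_add_le _ _
    _ ≤ 1 + 1 * M := by
          have := hv j
          have h1 := hu j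
          have := abs_nonneg (v j)
          nlinarith [hv j, hu j, abs_nonneg (v j), abs_nonneg t, ht]
    _ = U := by rw [hU]; ring
  have hg : ∀ j, ‖a j + t • b j‖ ≤ A := fun j => by
    calc ‖a j + t • b j‖ ≤ ‖a j‖ + ‖t • b j‖ := norm_add_le _ _
    _ ≤ Ka + |t| * ‖b j‖ := by rw [norm_smul, Real.norm_eq_abs]; exact add_le_add (ha j) le_rfl
    _ ≤ Ka + 1 * Kb := by
          have := hb j
          have := norm_nonneg (b j)
          nlinarith [abs_nonneg t]
    _ = A := by rw [hA]; ring
  have hAnn : (0:ℝ) ≤ A := by rw [hA]; positivity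
  have hUnn : (0:ℝ) ≤ U := by rw [hU]; positivity
  have hS : ‖Sf u v a b t‖ ≤ SB := by
    rw [Sf]
    calc ‖∑ j, (2 * (u j + t * v j)) • (a j + t • b j)‖
        ≤ ∑ j, ‖(2 * (u j + t * v j)) • (a j + t • b j)‖ := norm_sum_le _ _
      _ ≤ ∑ _j : Fin m, 2 * U * A := by
          refine Finset.sum_le_sum fun j _ => ?_
          rw [norm_smul, Real.norm_eq_abs, abs_mul, abs_two]
          have := hN j
          have := hg j
          nlinarith [abs_nonneg (u j + t * v j), norm_nonneg (a j + t • b j)]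
      _ = SB := by simp [hSB, Finset.sum_const, Finset.card_univ]
  have hQd : |Qd u v t| ≤ QdB := by
    rw [Qd]
    calc |∑ j, 2 * (u j + t * v j) * v j| ≤ ∑ j, |2 * (u j + t * v j) * v j| :=
          Finset.abs_sum_le_sum_abs _ _
      _ ≤ ∑ _j : Fin m, 2 * U * M := by
          refine Finset.sum_le_sum fun j _ => ?_
          rw [abs_mul, abs_mul, abs_two]
          have := hN j
          have := hv j
          nlinarith [abs_nonneg (u j + t * v j), abs_nonneg (v j)]
      _ = QdB := by simp [hQdB, Finset.sum_const, Finset.card_univ]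
  have hQdnn : (0:ℝ) ≤ QdB := by rw [hQdB]; positivity
  have hR3 : Rf u v t ^ 3 ≤ 8 := by
    calc Rf u v t ^ 3 ≤ 2 ^ 3 := pow_le_pow_left₀ hR0 hR 3
    _ = 8 := by norm_num
  have hR2 : Rf u v t ^ 2 ≤ 4 := by
    calc Rf u v t ^ 2 ≤ 2 ^ 2 := pow_le_pow_left₀ hR0 hR 2
    _ = 4 := by norm_num
  have hRd : |Rd u v t| ≤ RdB := by
    rw [Rd, hRdB]
    rw [abs_mul, abs_mul]
    have h3 : |(-(1/2) : ℝ)| = 1/2 := by norm_num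
    rw [h3]
    have : |Rf u v t ^ 3| = Rf u v t ^ 3 := abs_of_nonneg (by positivity)
    rw [this]
    have := mul_le_mul hR3 hQd (abs_nonneg _) (by norm_num : (0:ℝ) ≤ 8)
    nlinarith [this]
  have hRdnn : (0:ℝ) ≤ RdB := by rw [hRdB]; positivity
  have hSd : ‖Sd u v a b t‖ ≤ SdB := by
    rw [Sd]
    calc ‖∑ j, ((2 * (u j + t * v j)) • b j + (2 * v j) • (a j + t • b j))‖
        ≤ ∑ j, ‖(2 * (u j + t * v j)) • b j + (2 * v j) • (a j + t • b j)‖ := norm_sum_le _ _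
      _ ≤ ∑ _j : Fin m, (2 * U * Kb + 2 * M * A) := by
          refine Finset.sum_le_sum fun j _ => ?_
          calc ‖(2 * (u j + t * v j)) • b j + (2 * v j) • (a j + t • b j)‖
              ≤ ‖(2 * (u j + t * v j)) • b j‖ + ‖(2 * v j) • (a j + t • b j)‖ := norm_add_le _ _
            _ ≤ 2 * U * Kb + 2 * M * A := by
                rw [norm_smul, norm_smul, Real.norm_eq_abs, Real.norm_eq_abs, abs_mul, abs_mul,
                  abs_two]
                have := hN j; have := hv j; have := hb j; have := hg j
                nlinarith [abs_nonneg (u j + t * v j), norm_nonneg (b j), abs_nonneg (v j),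
                  norm_nonneg (a j + t • b j)]
      _ = SdB := by simp [hSdB, Finset.sum_const, Finset.card_univ]; ring
  have hSdnn : (0:ℝ) ≤ SdB := by rw [hSdB]; positivity
  have hSnn : (0:ℝ) ≤ SB := by rw [hSB]; positivity
  have hG : ∀ i, ‖Gf u v a b i t‖ ≤ GB := fun i => by
    rw [Gf]
    calc ‖Rf u v t • (a i + t • b i) + ((u i + t * v i) * (-(1/2) * Rf u v t ^ 3)) • Sf u v a b t‖
        ≤ ‖Rf u v t • (a i + t • b i)‖ +
            ‖((u i + t * v i) * (-(1/2) * Rf u v t ^ 3)) • Sf u v a b t‖ := norm_add_le _ _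
      _ ≤ 2 * A + 4 * U * SB := by
          rw [norm_smul, norm_smul, Real.norm_eq_abs, Real.norm_eq_abs,
            abs_of_nonneg hR0, abs_mul, abs_mul]
          have h1 : |(-(1/2):ℝ)| = 1/2 := by norm_num
          rw [h1]
          have h2 : |Rf u v t ^ 3| = Rf u v t ^ 3 := abs_of_nonneg (by positivity)
          rw [h2]
          have b1 : Rf u v t * ‖a i + t • b i‖ ≤ 2 * A :=
            mul_le_mul hR (hg i) (norm_nonneg _) (by norm_num)
          have c1 : |u i + t * v i| * (1/2 * Rf u v t ^ 3) ≤ 4 * U := by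
            have hh : (1/2) * Rf u v t ^ 3 ≤ 4 := by linarith
            calc |u i + t * v i| * (1/2 * Rf u v t ^ 3) ≤ U * 4 :=
                  mul_le_mul (hN i) hh (by positivity) hUnn
              _ = 4 * U := by ring
          have b2 : |u i + t * v i| * (1/2 * Rf u v t ^ 3) * ‖Sf u v a b t‖ ≤ 4 * U * SB :=
            calc |u i + t * v i| * (1/2 * Rf u v t ^ 3) * ‖Sf u v a b t‖
                ≤ (4 * U) * SB := mul_le_mul c1 hS (norm_nonneg _) (by positivity)
              _ = 4 * U * SB := by ring
          linarith
      _ = GB := hGB.symm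
  have hGd : ∀ i, ‖Gd u v a b i t‖ ≤ GdB := fun i => by
    rw [Gd]
    have e1 : ‖Rd u v t • (a i + t • b i)‖ ≤ RdB * A := by
      rw [norm_smul, Real.norm_eq_abs]
      exact mul_le_mul hRd (hg i) (norm_nonneg _) hRdnn
    have e2 : ‖Rf u v t • b i‖ ≤ 2 * Kb := by
      rw [norm_smul, Real.norm_eq_abs, abs_of_nonneg hR0]
      exact mul_le_mul hR (hb i) (norm_nonneg _) (by norm_num)
    have e3 : ‖(v i * (-(1/2) * Rf u v t ^ 3) +
        (u i + t * v i) * (-(3/2) * Rf u v t ^ 2 * Rd u v t)) • Sf u v a b t‖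
        ≤ (4 * M + 6 * U * RdB) * SB := by
      rw [norm_smul, Real.norm_eq_abs]
      have e31 : |v i * (-(1/2) * Rf u v t ^ 3)| ≤ 4 * M := by
        rw [abs_mul, abs_mul, abs_of_nonneg (pow_nonneg hR0 3),
          (by norm_num : |(-(1/2):ℝ)| = 1/2)]
        have hh : (1/2 : ℝ) * Rf u v t ^ 3 ≤ 4 := by linarith
        have := mul_le_mul (hv i) hh (by positivity) hM
        linarith
      have e32 : |(u i + t * v i) * (-(3/2) * Rf u v t ^ 2 * Rd u v t)| ≤ 6 * U * RdB := by
        rw [abs_mul]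
        have hinner : |(-(3/2) * Rf u v t ^ 2 * Rd u v t)| ≤ 6 * RdB := by
          rw [abs_mul, abs_mul, abs_of_nonneg (pow_nonneg hR0 2),
            (by norm_num : |(-(3/2):ℝ)| = 3/2)]
          have q1 : (3/2 : ℝ) * Rf u v t ^ 2 ≤ 6 := by linarith
          exact mul_le_mul q1 hRd (abs_nonneg _) (by norm_num)
        have := mul_le_mul (hN i) hinner (abs_nonneg _) hUnn
        linarith
      have hcoef : |v i * (-(1/2) * Rf u v t ^ 3) +
          (u i + t * v i) * (-(3/2) * Rf u v t ^ 2 * Rd u v t)| ≤ 4 * M + 6 * U * RdB :=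
        le_trans (abs_add_le _ _) (add_le_add e31 e32)
      exact mul_le_mul hcoef hS (norm_nonneg _) (by positivity)
    have e4 : ‖((u i + t * v i) * (-(1/2) * Rf u v t ^ 3)) • Sd u v a b t‖ ≤ 4 * U * SdB := by
      rw [norm_smul, Real.norm_eq_abs, abs_mul, abs_mul]
      have h1 : |(-(1/2):ℝ)| = 1/2 := by norm_num
      rw [h1]
      have h3 : |Rf u v t ^ 3| = Rf u v t ^ 3 := abs_of_nonneg (by positivity)
      rw [h3]
      have c1 : |u i + t * v i| * (1/2 * Rf u v t ^ 3) ≤ 4 * U := by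
        have hh : (1/2) * Rf u v t ^ 3 ≤ 4 := by linarith
        calc |u i + t * v i| * (1/2 * Rf u v t ^ 3) ≤ U * 4 :=
              mul_le_mul (hN i) hh (by positivity) hUnn
          _ = 4 * U := by ring
      calc |u i + t * v i| * (1/2 * Rf u v t ^ 3) * ‖Sd u v a b t‖
          ≤ (4 * U) * SdB := mul_le_mul c1 hSd (norm_nonneg _) (by positivity)
        _ = 4 * U * SdB := by ring
    calc ‖Rd u v t • (a i + t • b i) + Rf u v t • b i +
          (v i * (-(1/2) * Rf u v t ^ 3) +
            (u i + t * v i) * (-(3/2) * Rf u v t ^ 2 * Rd u v t)) • Sf u v a b t +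
          ((u i + t * v i) * (-(1/2) * Rf u v t ^ 3)) • Sd u v a b t‖
        ≤ ‖Rd u v t • (a i + t • b i) + Rf u v t • b i +
          (v i * (-(1/2) * Rf u v t ^ 3) +
            (u i + t * v i) * (-(3/2) * Rf u v t ^ 2 * Rd u v t)) • Sf u v a b t‖ +
          ‖((u i + t * v i) * (-(1/2) * Rf u v t ^ 3)) • Sd u v a b t‖ := norm_add_le _ _
      _ ≤ (‖Rd u v t • (a i + t • b i) + Rf u v t • b i‖ +
          ‖(v i * (-(1/2) * Rf u v t ^ 3) +
            (u i + t * v i) * (-(3/2) * Rf u v t ^ 2 * Rd u v t)) • Sf u v a b t‖) +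
          ‖((u i + t * v i) * (-(1/2) * Rf u v t ^ 3)) • Sd u v a b t‖ := by
            gcongr
            exact norm_add_le _ _
      _ ≤ ((‖Rd u v t • (a i + t • b i)‖ + ‖Rf u v t • b i‖) +
          ‖(v i * (-(1/2) * Rf u v t ^ 3) +
            (u i + t * v i) * (-(3/2) * Rf u v t ^ 2 * Rd u v t)) • Sf u v a b t‖) +
          ‖((u i + t * v i) * (-(1/2) * Rf u v t ^ 3)) • Sd u v a b t‖ := by
            gcongr
            exact norm_add_le _ _
      _ ≤ ((RdB * A + 2 * Kb) + (4 * M + 6 * U * RdB) * SB) + 4 * U * SdB := by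
            gcongr
      _ = GdB := by rw [hGdB]
  have hGBnn : (0:ℝ) ≤ GB := by rw [hGB]; positivity
  have hGdBnn : (0:ℝ) ≤ GdB := by
    rw [hGdB]
    have : (0:ℝ) ≤ (4 * M + 6 * U * RdB) * SB := by positivity
    positivity
  calc |Fd u v a b t| ≤ ∑ i, |⟪Gf u v a b i t, Gd u v a b i t⟫_ℝ +
        ⟪Gd u v a b i t, Gf u v a b i t⟫_ℝ| := Finset.abs_sum_le_sum_abs _ _
    _ ≤ ∑ _i : Fin m, 2 * (GB * GdB) := by
        refine Finset.sum_le_sum fun i _ => ?_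
        calc |⟪Gf u v a b i t, Gd u v a b i t⟫_ℝ + ⟪Gd u v a b i t, Gf u v a b i t⟫_ℝ|
            ≤ |⟪Gf u v a b i t, Gd u v a b i t⟫_ℝ| + |⟪Gd u v a b i t, Gf u v a b i t⟫_ℝ| :=
              abs_add_le _ _
          _ ≤ ‖Gf u v a b i t‖ * ‖Gd u v a b i t‖ + ‖Gd u v a b i t‖ * ‖Gf u v a b i t‖ :=
              add_le_add (abs_real_inner_le_norm _ _) (abs_real_inner_le_norm _ _)
          _ ≤ 2 * (GB * GdB) := by
              have q1 := mul_le_mul (hG i) (hGd i) (norm_nonneg _) hGBnn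
              have q2 := mul_le_mul (hGd i) (hG i) (norm_nonneg _) hGdBnn
              linarith
    _ = Cb m M Ka Kb := by
        simp only [Finset.sum_const, Finset.card_univ, Fintype.card_fin, nsmul_eq_mul, Cb]
        rfl
end bound

section meas
variable {α : Type*} [MeasurableSpace α] {μ : Measure α}

lemma Fd_aestronglyMeasurable (u v : α → Fin m → ℝ) (a b : α → Fin m → F) (t : ℝ)
    (hu : ∀ j, AEStronglyMeasurable (fun x => u x j) μ)
    (hv : ∀ j, AEStronglyMeasurable (fun x => v x j) μ)
    (ha : ∀ j, AEStronglyMeasurable (fun x => a x j) μ)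
    (hb : ∀ j, AEStronglyMeasurable (fun x => b x j) μ) :
    AEStronglyMeasurable (fun x => Fd (u x) (v x) (a x) (b x) t) μ := by
  have hN : ∀ j, AEStronglyMeasurable (fun x => u x j + t * v x j) μ :=
    fun j => (hu j).add ((hv j).const_mul t)
  have hg : ∀ j, AEStronglyMeasurable (fun x => a x j + t • b x j) μ :=
    fun j => (ha j).add ((hb j).const_smul t)
  have hQ : AEStronglyMeasurable (fun x => Qf (u x) (v x) t) μ := by
    unfold Qf
    exact Finset.aestronglyMeasurable_fun_sum _ fun j _ =>
      (continuous_pow 2).comp_aestronglyMeasurable (hN j)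
  have hR : AEStronglyMeasurable (fun x => Rf (u x) (v x) t) μ := by
    unfold Rf
    exact ((Real.continuous_sqrt.measurable.comp_aemeasurable hQ.aemeasurable).inv).aestronglyMeasurable
  have hS : AEStronglyMeasurable (fun x => Sf (u x) (v x) (a x) (b x) t) μ := by
    unfold Sf
    exact Finset.aestronglyMeasurable_fun_sum _ fun j _ => ((hN j).const_mul 2).smul (hg j)
  have hR3 : AEStronglyMeasurable (fun x => Rf (u x) (v x) t ^ 3) μ :=
    (continuous_pow 3).comp_aestronglyMeasurable hR
  have hR2 : AEStronglyMeasurable (fun x => Rf (u x) (v x) t ^ 2) μ :=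
    (continuous_pow 2).comp_aestronglyMeasurable hR
  have hG : ∀ i, AEStronglyMeasurable (fun x => Gf (u x) (v x) (a x) (b x) i t) μ := by
    intro i
    unfold Gf
    exact (hR.smul (hg i)).add (((hN i).mul (hR3.const_mul (-(1/2)))).smul hS)
  have hQd : AEStronglyMeasurable (fun x => Qd (u x) (v x) t) μ := by
    unfold Qd
    exact Finset.aestronglyMeasurable_fun_sum _ fun j _ => ((hN j).const_mul 2).mul (hv j)
  have hRd : AEStronglyMeasurable (fun x => Rd (u x) (v x) t) μ := by
    unfold Rd
    exact (hR3.const_mul (-(1/2))).mul hQd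
  have hSd : AEStronglyMeasurable (fun x => Sd (u x) (v x) (a x) (b x) t) μ := by
    unfold Sd
    exact Finset.aestronglyMeasurable_fun_sum _ fun j _ =>
      (((hN j).const_mul 2).smul (hb j)).add (((hv j).const_mul 2).smul (hg j))
  have hGd : ∀ i, AEStronglyMeasurable (fun x => Gd (u x) (v x) (a x) (b x) i t) μ := by
    intro i
    unfold Gd
    refine (((hRd.smul (hg i)).add (hR.smul (hb i))).add ?_).add
      (((hN i).mul (hR3.const_mul (-(1/2)))).smul hSd)
    exact (((hv i).mul (hR3.const_mul (-(1/2)))).add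
      ((hN i).mul ((hR2.const_mul (-(3/2))).mul hRd))).smul hS
  unfold Fd
  exact Finset.aestronglyMeasurable_fun_sum _ fun i _ =>
    ((hG i).inner (hGd i)).add ((hGd i).inner (hG i))
end meas
end Stmt12Aux

section Stmt12Geom

lemma stmt12_norm_eq_sqrt_sum {m : ℕ} (v : EuclideanSpace ℝ (Fin m)) :
    ‖v‖ = Real.sqrt (∑ i, v i ^ 2) := by
  rw [EuclideanSpace.norm_eq]
  congr 1
  exact Finset.sum_congr rfl fun i _ => by rw [Real.norm_eq_abs, sq_abs]

lemma stmt12_coord_le_norm {m : ℕ} (v : EuclideanSpace ℝ (Fin m)) (i : Fin m) :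
    |v i| ≤ ‖v‖ := by
  rw [EuclideanSpace.norm_eq, ← Real.sqrt_sq_eq_abs]
  refine Real.sqrt_le_sqrt ?_
  have : v i ^ 2 = ‖v i‖ ^ 2 := by rw [Real.norm_eq_abs, sq_abs]
  rw [this]
  exact Finset.single_le_sum (f := fun j => ‖v j‖ ^ 2) (fun j _ => by positivity)
    (Finset.mem_univ i)

lemma stmt12_sum_sq_one {m : ℕ} (v : EuclideanSpace ℝ (Fin m)) (h : ‖v‖ = 1) :
    ∑ j, v j ^ 2 = 1 := by
  rw [stmt12_norm_eq_sqrt_sum] at h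
  exact Real.sqrt_eq_one.1 h

lemma stmt12_normalize_dist_le {G : Type*} [NormedAddCommGroup G] [NormedSpace ℝ G]
    (v w : G) (r : ℝ) (hr : 0 < r) (hv : r ≤ ‖v‖) (hw : r ≤ ‖w‖) :
    ‖‖v‖⁻¹ • v - ‖w‖⁻¹ • w‖ ≤ 2 / r * ‖v - w‖ := by
  have hv0 : (0:ℝ) < ‖v‖ := lt_of_lt_of_le hr hv
  have hw0 : (0:ℝ) < ‖w‖ := lt_of_lt_of_le hr hw
  have key : ‖v‖⁻¹ • v - ‖w‖⁻¹ • w = ‖v‖⁻¹ • (v - w) + (‖v‖⁻¹ - ‖w‖⁻¹) • w := by module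
  rw [key]
  have t1 : ‖(‖v‖⁻¹ : ℝ) • (v - w)‖ ≤ ‖v - w‖ / r := by
    rw [norm_smul, Real.norm_eq_abs, abs_of_nonneg (by positivity)]
    rw [inv_mul_eq_div]
    exact div_le_div₀ (norm_nonneg _) le_rfl hr hv
  have t2 : ‖((‖v‖⁻¹ - ‖w‖⁻¹ : ℝ)) • w‖ ≤ ‖v - w‖ / r := by
    rw [norm_smul, Real.norm_eq_abs, inv_sub_inv hv0.ne' hw0.ne', abs_div, abs_mul,
      abs_of_nonneg hv0.le, abs_of_nonneg hw0.le]
    have e1 : |‖w‖ - ‖v‖| / (‖v‖ * ‖w‖) * ‖w‖ = |‖w‖ - ‖v‖| / ‖v‖ := by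
      field_simp
    rw [e1]
    refine div_le_div₀ (norm_nonneg _) ?_ hr hv
    rw [abs_sub_comm]
    exact abs_norm_sub_norm_le v w
  calc ‖(‖v‖⁻¹ : ℝ) • (v - w) + ((‖v‖⁻¹ - ‖w‖⁻¹ : ℝ)) • w‖
      ≤ ‖(‖v‖⁻¹ : ℝ) • (v - w)‖ + ‖((‖v‖⁻¹ - ‖w‖⁻¹ : ℝ)) • w‖ := norm_add_le _ _
    _ ≤ ‖v - w‖ / r + ‖v - w‖ / r := add_le_add t1 t2
    _ = 2 / r * ‖v - w‖ := by rw [← add_div, div_mul_eq_mul_div, two_mul]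

variable {n k : ℕ}

local notation "H" => EuclideanSpace ℝ (Fin n)
local notation "E" => EuclideanSpace ℝ (Fin (k+1))

lemma stmt12_sq_deriv {q : H → ℝ} {L : H →L[ℝ] ℝ} {x : H} (h : HasFDerivAt q L x) :
    HasFDerivAt (fun y => q y ^ 2) ((2 * q x) • L) x := by
  exact ((h.mul h).congr_fderiv (by rw [two_mul, add_smul])).congr_of_eventuallyEq
    (Eventually.of_forall fun y => pow_two (q y))

lemma stmt12_norm_pert (f φ : H → E) (t : ℝ) (y : H) :
    ‖f y + t • φ y‖ = Real.sqrt (Stmt12Aux.Qf (fun j => f y j) (fun j => φ y j) t) := by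
  rw [stmt12_norm_eq_sqrt_sum]
  unfold Stmt12Aux.Qf
  congr 1

/-- Pointwise gradient of a component of the normalized perturbed map. -/
lemma stmt12_gradA (f φ : H → E) (t : ℝ) (x : H) (a b : Fin (k+1) → H)
    (ha : ∀ j, HasGradientAt (fun y => f y j) (a j) x)
    (hb : ∀ j, HasGradientAt (fun y => φ y j) (b j) x)
    (hpos : 0 < ‖f x + t • φ x‖) (i : Fin (k+1)) :
    HasGradientAt (fun y => (‖f y + t • φ y‖⁻¹ • (f y + t • φ y)) i)
      (‖f x + t • φ x‖⁻¹ • (a i + t • b i) +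
        ((f x i + t * φ x i) * (-(1/2) * ‖f x + t • φ x‖⁻¹ ^ 3)) •
          ∑ j, (2 * (f x j + t * φ x j)) • (a j + t • b j)) x := by
  set q : H → ℝ := fun y => ∑ j, (f y j + t * φ y j) ^ 2 with hqdef
  have hsq : ∀ y, ‖f y + t • φ y‖ = Real.sqrt (q y) := by
    intro y
    rw [stmt12_norm_eq_sqrt_sum]
    simp [hqdef, PiLp.add_apply, PiLp.smul_apply, smul_eq_mul]
  have hNj : ∀ j, HasFDerivAt (fun y => f y j + t * φ y j)
      (toDual ℝ H (a j) + t • toDual ℝ H (b j)) x := by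
    intro j
    exact (ha j).hasFDerivAt.add (((hb j).hasFDerivAt).const_mul t)
  have hq : HasFDerivAt q
      (∑ j, (2 * (f x j + t * φ x j)) • (toDual ℝ H (a j) + t • toDual ℝ H (b j))) x :=
    HasFDerivAt.fun_sum fun j _ => stmt12_sq_deriv (hNj j)
  have hqpos : 0 < q x := by
    have : q x = ‖f x + t • φ x‖ ^ 2 := by
      rw [hsq x, Real.sq_sqrt]
      positivity
    rw [this]; positivity
  have hs : HasDerivAt (fun s => (Real.sqrt s)⁻¹)
      (-(1/2) * (Real.sqrt (q x))⁻¹ ^ 3) (q x) := Stmt12Aux.sqrtinv_hasDerivAt hqpos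
  have hr : HasFDerivAt (fun y => (Real.sqrt (q y))⁻¹)
      ((-(1/2) * (Real.sqrt (q x))⁻¹ ^ 3) •
        ∑ j, (2 * (f x j + t * φ x j)) • (toDual ℝ H (a j) + t • toDual ℝ H (b j))) x :=
    hs.comp_hasFDerivAt x hq
  have hmul := hr.mul (hNj i)
  have hfun : (fun y => (‖f y + t • φ y‖⁻¹ • (f y + t • φ y)) i)
      = fun y => (Real.sqrt (q y))⁻¹ * (f y i + t * φ y i) := by
    funext y
    rw [PiLp.smul_apply, smul_eq_mul, hsq y]
    simp [PiLp.add_apply, PiLp.smul_apply, smul_eq_mul]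
  rw [hasGradientAt_iff_hasFDerivAt, hfun, hsq x]
  refine hmul.congr_fderiv ?_
  simp only [map_add, map_sum, map_smulₛₗ, starRingEnd_apply, star_trivial]
  module

/-- Same, with the gradient expressed through the auxiliary functions `Gf`. -/
lemma stmt12_gradA' (f φ : H → E) (t : ℝ) (x : H) (a b : Fin (k+1) → H)
    (ha : ∀ j, HasGradientAt (fun y => f y j) (a j) x)
    (hb : ∀ j, HasGradientAt (fun y => φ y j) (b j) x)
    (hpos : 0 < ‖f x + t • φ x‖) (i : Fin (k+1)) :
    HasGradientAt (fun y => (‖f y + t • φ y‖⁻¹ • (f y + t • φ y)) i)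
      (Stmt12Aux.Gf (fun j => f x j) (fun j => φ x j) a b i t) x := by
  have h := stmt12_gradA f φ t x a b ha hb hpos i
  rw [Stmt12Aux.Gf, Stmt12Aux.Sf, Stmt12Aux.Rf, ← stmt12_norm_pert]
  exact h

/-- gradient of `ψ_i = φ_i - f_i (f·φ)` -/
lemma stmt12_gradB (f φ : H → E) (x : H) (a b : Fin (k+1) → H)
    (ha : ∀ j, HasGradientAt (fun y => f y j) (a j) x)
    (hb : ∀ j, HasGradientAt (fun y => φ y j) (b j) x) (i : Fin (k+1)) :
    HasGradientAt (fun y => φ y i - f y i * (∑ j, f y j * φ y j))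
      (b i - (∑ j, f x j * φ x j) • a i -
        f x i • (∑ j, (φ x j • a j + f x j • b j))) x := by
  have hsum : HasFDerivAt (fun y => ∑ j, f y j * φ y j)
      (∑ j, (f x j • toDual ℝ H (b j) + φ x j • toDual ℝ H (a j))) x :=
    HasFDerivAt.fun_sum fun j _ => (ha j).hasFDerivAt.mul (hb j).hasFDerivAt
  have hprod := (ha i).hasFDerivAt.mul hsum
  have hres := (hb i).hasFDerivAt.sub hprod
  rw [hasGradientAt_iff_hasFDerivAt]
  refine hres.congr_fderiv ?_
  simp only [map_sub, map_add, map_sum, map_smulₛₗ, starRingEnd_apply, star_trivial]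
  have reorder : (∑ j, (φ x j • toDual ℝ H (a j) + f x j • toDual ℝ H (b j)))
      = ∑ j, (f x j • toDual ℝ H (b j) + φ x j • toDual ℝ H (a j)) :=
    Finset.sum_congr rfl fun j _ => add_comm _ _
  rw [reorder]
  module

/-- sphere constraint: `Σ f_j ∇f_j = 0` at differentiability points inside `Ω` -/
lemma stmt12_sphere_grad_zero (f : H → E) (Ω : Set (EuclideanSpace ℝ (Fin n)))
    (hΩo : IsOpen Ω) (hs : ∀ y ∈ Ω, ‖f y‖ = 1) (x : H) (hx : x ∈ Ω) (a : Fin (k+1) → H)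
    (ha : ∀ j, HasGradientAt (fun y => f y j) (a j) x) :
    ∑ j, f x j • a j = 0 := by
  have hq0 : HasFDerivAt (fun y => ∑ j, (f y j) ^ 2)
      (∑ j, (2 * f x j) • toDual ℝ H (a j)) x := by
    refine HasFDerivAt.fun_sum fun j _ => ?_
    exact stmt12_sq_deriv (ha j).hasFDerivAt
  have heq : (fun y => ∑ j, (f y j) ^ 2) =ᶠ[𝓝 x] fun _ => (1:ℝ) := by
    filter_upwards [hΩo.mem_nhds hx] with y hy
    exact stmt12_sum_sq_one (f y) (hs y hy)
  have hconst : HasFDerivAt (fun y => ∑ j, (f y j) ^ 2)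
      (0 : EuclideanSpace ℝ (Fin n) →L[ℝ] ℝ) x := by
    have h0 : HasFDerivAt (fun _ : EuclideanSpace ℝ (Fin n) => (1:ℝ))
        (0 : EuclideanSpace ℝ (Fin n) →L[ℝ] ℝ) x := hasFDerivAt_const (𝕜 := ℝ) 1 x
    exact h0.congr_of_eventuallyEq heq
  have hzero : ∑ j, (2 * f x j) • toDual ℝ H (a j) = 0 := hq0.unique hconst
  have h2 : (2:ℝ) • ∑ j, f x j • a j = 0 := by
    have := congrArg (toDual ℝ H).symm hzero
    simp only [map_sum, map_smulₛₗ, starRingEnd_apply, star_trivial, map_zero,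
      LinearIsometryEquiv.symm_apply_apply] at this
    rw [Finset.smul_sum]
    rw [← this]
    exact Finset.sum_congr rfl fun j _ => by module
  rcases smul_eq_zero.1 h2 with h | h
  · norm_num at h
  · exact h

end Stmt12Geom

set_option maxHeartbeats 2000000 in
/-- Let `Ω ⊆ ℝⁿ` be a bounded open set, `f : Ω → 𝕊ᵏ` a Lipschitz map, and
`φ : Ω → ℝ^{k+1}` a Lipschitz map with compact support contained in `Ω`. Then for all
sufficiently small `t`, `‖f + tφ‖ > 0` on `Ω`, so `f_t := (f + tφ)/‖f + tφ‖` is a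
well-defined Lipschitz map from `Ω` to `𝕊ᵏ`; moreover `t ↦ E(f_t)` is differentiable at
`t = 0` with derivative `Σᵢ ∫_Ω ⟨∇fᵢ, ∇(φᵢ − fᵢ (f·φ))⟩ dℒⁿ`. -/
theorem stmt12 (n k : ℕ) (Ω : Set (EuclideanSpace ℝ (Fin n)))
    (hΩo : IsOpen Ω) (hΩb : Bornology.IsBounded Ω)
    (f φ : EuclideanSpace ℝ (Fin n) → EuclideanSpace ℝ (Fin (k + 1)))
    (Kf Kφ : ℝ≥0) (hf : LipschitzOnWith Kf f Ω)
    (hsphere : ∀ x ∈ Ω, ‖f x‖ = 1)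
    (hφ : LipschitzOnWith Kφ φ Ω)
    (hsupp : tsupport φ ⊆ Ω) (hsuppc : IsCompact (tsupport φ)) :
    ∃ δ > (0:ℝ),
      (∀ t : ℝ, |t| < δ →
        (∀ x ∈ Ω, 0 < ‖f x + t • φ x‖) ∧
        (∃ K : ℝ≥0, LipschitzOnWith K
          (fun x => ‖f x + t • φ x‖⁻¹ • (f x + t • φ x)) Ω) ∧
        (∀ x ∈ Ω, ‖(‖f x + t • φ x‖⁻¹ • (f x + t • φ x))‖ = 1)) ∧
      HasDerivAt
        (fun t : ℝ => dirichletEnergy Ω (fun x => ‖f x + t • φ x‖⁻¹ • (f x + t • φ x)))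
        (∑ i : Fin (k + 1), ∫ x in Ω,
          (inner ℝ (gradient (fun y => f y i) x)
            (gradient (fun y => φ y i -
              f y i * (∑ j : Fin (k + 1), f y j * φ y j)) x) : ℝ) ∂volume)
        0 := by
  classical
  -- a global bound for φ
  obtain ⟨M, hM0, hMb⟩ : ∃ M : ℝ, 0 ≤ M ∧ ∀ x, ‖φ x‖ ≤ M := by
    rcases (tsupport φ).eq_empty_or_nonempty with h | h
    · refine ⟨0, le_rfl, fun x => ?_⟩
      have : φ x = 0 := image_eq_zero_of_notMem_tsupport (by simp [h])
      simp [this]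
    · have hcont : ContinuousOn φ (tsupport φ) := hφ.continuousOn.mono hsupp
      obtain ⟨C, hC⟩ := hsuppc.exists_bound_of_continuousOn hcont
      refine ⟨max C 0, le_max_right _ _, fun x => ?_⟩
      by_cases hx : x ∈ tsupport φ
      · exact (hC x hx).trans (le_max_left _ _)
      · have : φ x = 0 := image_eq_zero_of_notMem_tsupport hx
        simp [this]
  set δ : ℝ := min 1 (1 / (2 * (M + 1))) with hδdef
  have hδpos : 0 < δ := by
    have h2 : (0:ℝ) < 1 / (2 * (M + 1)) := by positivity
    exact lt_min one_pos h2
  have hδ1 : δ ≤ 1 := min_le_left _ _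
  have hδ2 : δ ≤ 1 / (2 * (M + 1)) := min_le_right _ _
  have hlow : ∀ t : ℝ, |t| < δ → ∀ x ∈ Ω, (1:ℝ)/2 ≤ ‖f x + t • φ x‖ := by
    intro t ht x hx
    have h1 : ‖f x‖ ≤ ‖f x + t • φ x‖ + ‖t • φ x‖ := by
      have := norm_add_le (f x + t • φ x) (-(t • φ x))
      simpa using this
    have h2 : ‖t • φ x‖ ≤ δ * M := by
      rw [norm_smul, Real.norm_eq_abs]
      exact mul_le_mul ht.le (hMb x) (norm_nonneg _) hδpos.le
    have h3 : δ * M ≤ 1/2 := by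
      have h4 : δ * M ≤ (1 / (2 * (M + 1))) * M := mul_le_mul_of_nonneg_right hδ2 hM0
      have h5 : (1 / (2 * (M + 1))) * M ≤ 1/2 := by
        rw [div_mul_eq_mul_div, div_le_div_iff₀ (by positivity) (by norm_num)]
        nlinarith
      linarith
    have := hsphere x hx
    linarith
  have part1 : ∀ t : ℝ, |t| < δ →
      (∀ x ∈ Ω, 0 < ‖f x + t • φ x‖) ∧
      (∃ K : ℝ≥0, LipschitzOnWith K
        (fun x => ‖f x + t • φ x‖⁻¹ • (f x + t • φ x)) Ω) ∧
      (∀ x ∈ Ω, ‖(‖f x + t • φ x‖⁻¹ • (f x + t • φ x))‖ = 1) := by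
    intro t ht
    have hpos : ∀ x ∈ Ω, 0 < ‖f x + t • φ x‖ := fun x hx =>
      lt_of_lt_of_le (by norm_num) (hlow t ht x hx)
    refine ⟨hpos, ?_, ?_⟩
    · refine ⟨4 * (Kf + ‖t‖₊ * Kφ), ?_⟩
      rw [lipschitzOnWith_iff_dist_le_mul]
      intro x hx y hy
      have hN : dist (f x + t • φ x) (f y + t • φ y) ≤ (Kf + |t| * Kφ) * dist x y := by
        rw [dist_eq_norm]
        have e : (f x + t • φ x) - (f y + t • φ y) = (f x - f y) + t • (φ x - φ y) := by
          module
        rw [e]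
        have h1 : ‖f x - f y‖ ≤ Kf * dist x y := by
          rw [← dist_eq_norm]
          exact lipschitzOnWith_iff_dist_le_mul.1 hf x hx y hy
        have h2 : ‖φ x - φ y‖ ≤ Kφ * dist x y := by
          rw [← dist_eq_norm]
          exact lipschitzOnWith_iff_dist_le_mul.1 hφ x hx y hy
        calc ‖(f x - f y) + t • (φ x - φ y)‖
            ≤ ‖f x - f y‖ + ‖t • (φ x - φ y)‖ := norm_add_le _ _
          _ ≤ Kf * dist x y + |t| * (Kφ * dist x y) := by
              rw [norm_smul, Real.norm_eq_abs]
              exact add_le_add h1 (mul_le_mul_of_nonneg_left h2 (abs_nonneg t))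
          _ = (Kf + |t| * Kφ) * dist x y := by ring
      have key := stmt12_normalize_dist_le (f x + t • φ x) (f y + t • φ y) (1/2)
        (by norm_num) (hlow t ht x hx) (hlow t ht y hy)
      have h24 : (2:ℝ) / (1/2) = 4 := by norm_num
      rw [h24] at key
      calc dist (‖f x + t • φ x‖⁻¹ • (f x + t • φ x)) (‖f y + t • φ y‖⁻¹ • (f y + t • φ y))
          = ‖‖f x + t • φ x‖⁻¹ • (f x + t • φ x) - ‖f y + t • φ y‖⁻¹ • (f y + t • φ y)‖ :=
            dist_eq_norm _ _
        _ ≤ 4 * ‖(f x + t • φ x) - (f y + t • φ y)‖ := key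
        _ = 4 * dist (f x + t • φ x) (f y + t • φ y) := by rw [dist_eq_norm]
        _ ≤ 4 * ((Kf + |t| * Kφ) * dist x y) := by
            have := mul_le_mul_of_nonneg_left hN (by norm_num : (0:ℝ) ≤ 4)
            linarith
        _ = ((4 * (Kf + ‖t‖₊ * Kφ) : ℝ≥0) : ℝ) * dist x y := by
            have hc : ((4 * (Kf + ‖t‖₊ * Kφ) : ℝ≥0) : ℝ) = 4 * ((Kf : ℝ) + |t| * (Kφ : ℝ)) := by
              push_cast
              rw [Real.norm_eq_abs]
            rw [hc]
            ring
    · intro x hx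
      have h := hpos x hx
      rw [norm_smul, Real.norm_eq_abs, abs_of_nonneg (inv_nonneg.2 (norm_nonneg _)),
        inv_mul_cancel₀ h.ne']
  refine ⟨δ, hδpos, fun t ht => part1 t ht, ?_⟩
  -- Part 2 : the derivative
  set μ : Measure (EuclideanSpace ℝ (Fin n)) := volume.restrict Ω with hμdef
  haveI : IsFiniteMeasure μ := by
    constructor
    rw [hμdef, Measure.restrict_apply_univ]
    exact hΩb.measure_lt_top
  set T : Fin (k+1) → EuclideanSpace ℝ (Fin n) → ℝ := fun i x =>
    (inner ℝ (gradient (fun y => f y i) x)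
      (gradient (fun y => φ y i -
        f y i * (∑ j : Fin (k + 1), f y j * φ y j)) x) : ℝ) with hT
  set Ax : EuclideanSpace ℝ (Fin n) → Fin (k+1) → EuclideanSpace ℝ (Fin n) :=
    fun x j => gradient (fun y => f y j) x with hAx
  set Bx : EuclideanSpace ℝ (Fin n) → Fin (k+1) → EuclideanSpace ℝ (Fin n) :=
    fun x j => gradient (fun y => φ y j) x with hBx
  set Fm : ℝ → EuclideanSpace ℝ (Fin n) → ℝ := fun t x =>
    ∑ i, ‖gradient (fun y => (‖f y + t • φ y‖⁻¹ • (f y + t • φ y)) i) x‖ ^ 2 with hFm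
  set Fd' : ℝ → EuclideanSpace ℝ (Fin n) → ℝ := fun t x =>
    Stmt12Aux.Fd (fun j => f x j) (fun j => φ x j) (Ax x) (Bx x) t with hFd'
  have hgradmeas : ∀ g : EuclideanSpace ℝ (Fin n) → ℝ,
      Measurable (fun x => gradient g x) := by
    intro g
    exact ((toDual ℝ (EuclideanSpace ℝ (Fin n))).symm.continuous.measurable).comp
      (measurable_fderiv ℝ g)
  have hFm_meas : ∀ t, AEStronglyMeasurable (Fm t) μ := fun t => by
    apply Measurable.aestronglyMeasurable
    apply Finset.measurable_sum
    intro i _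
    exact ((hgradmeas _).norm).pow_const 2
  -- a.e. good points
  have hgood : ∀ᵐ x ∂μ, x ∈ Ω ∧
      (∀ j, HasGradientAt (fun y => f y j) (Ax x j) x) ∧
      (∀ j, HasGradientAt (fun y => φ y j) (Bx x j) x) ∧
      (∑ j, f x j • Ax x j = 0) ∧
      (∀ j, ‖Ax x j‖ ≤ (Kf:ℝ)) ∧ (∀ j, ‖Bx x j‖ ≤ (Kφ:ℝ)) ∧
      (∀ j, |f x j| ≤ 1) ∧ (∀ j, |φ x j| ≤ M) ∧
      (Stmt12Aux.Qf (fun j => f x j) (fun j => φ x j) 0 = 1) := by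
    have hdf := hf.ae_differentiableWithinAt (μ := volume) hΩo.measurableSet
    have hdφ := hφ.ae_differentiableWithinAt (μ := volume) hΩo.measurableSet
    have hmem : ∀ᵐ x ∂μ, x ∈ Ω := ae_restrict_mem hΩo.measurableSet
    rw [← hμdef] at hdf hdφ
    filter_upwards [hdf, hdφ, hmem] with x hdfx hdφx hx
    have hdf' : DifferentiableAt ℝ f x := hdfx.differentiableAt (hΩo.mem_nhds hx)
    have hdφ' : DifferentiableAt ℝ φ x := hdφx.differentiableAt (hΩo.mem_nhds hx)
    have hfj : ∀ j, DifferentiableAt ℝ (fun y => f y j) x := fun j =>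
      ((EuclideanSpace.proj j :
        EuclideanSpace ℝ (Fin (k+1)) →L[ℝ] ℝ).differentiableAt).comp x hdf'
    have hφj : ∀ j, DifferentiableAt ℝ (fun y => φ y j) x := fun j =>
      ((EuclideanSpace.proj j :
        EuclideanSpace ℝ (Fin (k+1)) →L[ℝ] ℝ).differentiableAt).comp x hdφ'
    have hga : ∀ j, HasGradientAt (fun y => f y j) (Ax x j) x := fun j =>
      (hfj j).hasGradientAt
    have hgb : ∀ j, HasGradientAt (fun y => φ y j) (Bx x j) x := fun j =>
      (hφj j).hasGradientAt
    have hfLip : ∀ j : Fin (k+1), LipschitzOnWith Kf (fun y => f y j) Ω := fun j => by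
      rw [lipschitzOnWith_iff_dist_le_mul]
      intro p hp q hq
      have h1 := lipschitzOnWith_iff_dist_le_mul.1 hf p hp q hq
      calc dist (f p j) (f q j) = |f p j - f q j| := Real.dist_eq _ _
        _ = |(f p - f q) j| := by rw [PiLp.sub_apply]
        _ ≤ ‖f p - f q‖ := stmt12_coord_le_norm _ _
        _ = dist (f p) (f q) := (dist_eq_norm _ _).symm
        _ ≤ Kf * dist p q := h1
    have hφLip : ∀ j : Fin (k+1), LipschitzOnWith Kφ (fun y => φ y j) Ω := fun j => by
      rw [lipschitzOnWith_iff_dist_le_mul]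
      intro p hp q hq
      have h1 := lipschitzOnWith_iff_dist_le_mul.1 hφ p hp q hq
      calc dist (φ p j) (φ q j) = |φ p j - φ q j| := Real.dist_eq _ _
        _ = |(φ p - φ q) j| := by rw [PiLp.sub_apply]
        _ ≤ ‖φ p - φ q‖ := stmt12_coord_le_norm _ _
        _ = dist (φ p) (φ q) := (dist_eq_norm _ _).symm
        _ ≤ Kφ * dist p q := h1
    have hAb : ∀ j, ‖Ax x j‖ ≤ (Kf:ℝ) := fun j => by
      have h1 := ((hga j).hasFDerivAt).le_of_lipschitzOn (hΩo.mem_nhds hx) (hfLip j)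
      rwa [LinearIsometryEquiv.norm_map] at h1
    have hBb : ∀ j, ‖Bx x j‖ ≤ (Kφ:ℝ) := fun j => by
      have h1 := ((hgb j).hasFDerivAt).le_of_lipschitzOn (hΩo.mem_nhds hx) (hφLip j)
      rwa [LinearIsometryEquiv.norm_map] at h1
    have hub : ∀ j, |f x j| ≤ 1 := fun j => by
      have := stmt12_coord_le_norm (f x) j
      rw [hsphere x hx] at this
      exact this
    have hvb : ∀ j, |φ x j| ≤ M := fun j =>
      (stmt12_coord_le_norm (φ x) j).trans (hMb x)
    have hQ1 : Stmt12Aux.Qf (fun j => f x j) (fun j => φ x j) 0 = 1 := by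
      rw [Stmt12Aux.Qf_zero_eq]
      exact stmt12_sum_sq_one (f x) (hsphere x hx)
    exact ⟨hx, hga, hgb,
      stmt12_sphere_grad_zero f Ω hΩo hsphere x hx (Ax x) hga,
      hAb, hBb, hub, hvb, hQ1⟩
  have hQpos : ∀ x ∈ Ω, ∀ s : ℝ, |s| < δ →
      0 < Stmt12Aux.Qf (fun j => f x j) (fun j => φ x j) s := by
    intro x hx s hs
    have h1 := hlow s hs x hx
    have h2 := stmt12_norm_pert f φ s x
    have h3 : 0 < Real.sqrt (Stmt12Aux.Qf (fun j => f x j) (fun j => φ x j) s) := by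
      rw [← h2]; linarith
    exact Real.sqrt_pos.1 h3
  have hRle : ∀ x ∈ Ω, ∀ s : ℝ, |s| < δ →
      Stmt12Aux.Rf (fun j => f x j) (fun j => φ x j) s ≤ 2 := by
    intro x hx s hs
    rw [Stmt12Aux.Rf, ← stmt12_norm_pert]
    have h1 := hlow s hs x hx
    calc ‖f x + s • φ x‖⁻¹ ≤ ((1:ℝ)/2)⁻¹ := inv_anti₀ (by norm_num) h1
      _ = 2 := by norm_num
  have hkey : ∀ᵐ x ∂μ, ∀ t ∈ ball (0:ℝ) δ, HasDerivAt (fun s => Fm s x) (Fd' t x) t := by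
    filter_upwards [hgood] with x hx
    obtain ⟨hxΩ, hga, hgb, hzero, -, -, -, -, -⟩ := hx
    intro t htb
    rw [mem_ball, dist_zero_right, Real.norm_eq_abs] at htb
    have hFeq : ∀ s ∈ ball (0:ℝ) δ, Fm s x
        = ∑ i, ‖Stmt12Aux.Gf (fun j => f x j) (fun j => φ x j) (Ax x) (Bx x) i s‖ ^ 2 := by
      intro s hs
      rw [mem_ball, dist_zero_right, Real.norm_eq_abs] at hs
      have hposx : 0 < ‖f x + s • φ x‖ :=
        lt_of_lt_of_le (by norm_num) (hlow s hs x hxΩ)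
      simp only [hFm]
      refine Finset.sum_congr rfl fun i _ => ?_
      rw [(stmt12_gradA' f φ s x (Ax x) (Bx x) hga hgb hposx i).gradient]
    have hD := Stmt12Aux.hasDerivAt_F (fun j => f x j) (fun j => φ x j) (Ax x) (Bx x) t
      (hQpos x hxΩ t htb)
    refine hD.congr_of_eventuallyEq ?_
    have hball : ball (0:ℝ) δ ∈ 𝓝 t := isOpen_ball.mem_nhds
      (by rwa [mem_ball, dist_zero_right, Real.norm_eq_abs])
    filter_upwards [hball] with s hs
    exact hFeq s hs
  have hbound : ∀ᵐ x ∂μ, ∀ t ∈ ball (0:ℝ) δ,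
      ‖Fd' t x‖ ≤ Stmt12Aux.Cb (k+1) M Kf Kφ := by
    filter_upwards [hgood] with x hx
    obtain ⟨hxΩ, -, -, -, hAb, hBb, hub, hvb, -⟩ := hx
    intro t htb
    rw [mem_ball, dist_zero_right, Real.norm_eq_abs] at htb
    rw [Real.norm_eq_abs]
    simp only [hFd']
    exact Stmt12Aux.Fd_bound _ _ _ _ hM0 Kf.coe_nonneg Kφ.coe_nonneg hub hvb hAb hBb
      (le_of_lt (lt_of_lt_of_le htb hδ1)) (hRle x hxΩ t htb)
  have hFm0_int : Integrable (Fm 0) μ := by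
    refine Integrable.mono' (integrable_const ((k+1) * (Kf:ℝ)^2)) (hFm_meas 0) ?_
    filter_upwards [hgood] with x hx
    obtain ⟨hxΩ, hga, hgb, hzero, hAb, -, -, -, hQ1⟩ := hx
    have hposx : 0 < ‖f x + (0:ℝ) • φ x‖ :=
      lt_of_lt_of_le (by norm_num) (hlow 0 (by simpa using hδpos) x hxΩ)
    have hFeq : Fm 0 x = ∑ i, ‖Ax x i‖^2 := by
      simp only [hFm]
      refine Finset.sum_congr rfl fun i _ => ?_
      rw [(stmt12_gradA' f φ 0 x (Ax x) (Bx x) hga hgb hposx i).gradient,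
        Stmt12Aux.Gf_zero hQ1 hzero]
    rw [Real.norm_eq_abs, hFeq,
      abs_of_nonneg (Finset.sum_nonneg fun i _ => by positivity)]
    calc ∑ i, ‖Ax x i‖^2 ≤ ∑ _i : Fin (k+1), (Kf:ℝ)^2 := by
          refine Finset.sum_le_sum fun i _ => ?_
          have h1 := hAb i
          nlinarith [norm_nonneg (Ax x i)]
      _ = (k+1) * (Kf:ℝ)^2 := by
          simp [Finset.sum_const, Finset.card_univ]
  have hfaesm : ∀ j : Fin (k+1), AEStronglyMeasurable (fun x => f x j) μ := by
    have hfc : AEStronglyMeasurable f μ := by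
      rw [hμdef]
      exact (hf.continuousOn).aestronglyMeasurable hΩo.measurableSet
    intro j
    exact ((EuclideanSpace.proj j :
      EuclideanSpace ℝ (Fin (k+1)) →L[ℝ] ℝ).continuous).comp_aestronglyMeasurable hfc
  have hφaesm : ∀ j : Fin (k+1), AEStronglyMeasurable (fun x => φ x j) μ := by
    have hφc : AEStronglyMeasurable φ μ := by
      rw [hμdef]
      exact (hφ.continuousOn).aestronglyMeasurable hΩo.measurableSet
    intro j
    exact ((EuclideanSpace.proj j :
      EuclideanSpace ℝ (Fin (k+1)) →L[ℝ] ℝ).continuous).comp_aestronglyMeasurable hφc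
  have hAmeas : ∀ j, AEStronglyMeasurable (fun x => Ax x j) μ := fun j =>
    (hgradmeas _).aestronglyMeasurable
  have hBmeas : ∀ j, AEStronglyMeasurable (fun x => Bx x j) μ := fun j =>
    (hgradmeas _).aestronglyMeasurable
  have hFd'0_meas : AEStronglyMeasurable (Fd' 0) μ := by
    simp only [hFd']
    exact Stmt12Aux.Fd_aestronglyMeasurable _ _ _ _ 0 hfaesm hφaesm hAmeas hBmeas
  have hmain := hasDerivAt_integral_of_dominated_loc_of_deriv_le
    (F := fun t x => Fm t x) (F' := fun t x => Fd' t x) (x₀ := (0:ℝ))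
    (bound := fun _ => Stmt12Aux.Cb (k+1) M Kf Kφ)
    (ball_mem_nhds 0 hδpos) (Eventually.of_forall fun t => hFm_meas t) hFm0_int hFd'0_meas hbound
    (integrable_const _) hkey
  obtain ⟨-, hderiv⟩ := hmain
  -- value of the derivative
  have hT_int : ∀ i, Integrable (fun x => T i x) μ := by
    intro i
    set CW : ℝ := (Kφ:ℝ) + ((k+1) * M) * (Kf:ℝ) + ((k+1) * (M * (Kf:ℝ) + (Kφ:ℝ))) with hCW
    refine Integrable.mono' (integrable_const ((Kf:ℝ) * CW)) ?_ ?_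
    · exact (((hgradmeas _).inner (hgradmeas _))).aestronglyMeasurable
    · filter_upwards [hgood] with x hx
      obtain ⟨hxΩ, hga, hgb, hzero, hAb, hBb, hub, hvb, hQ1⟩ := hx
      have hg2 : gradient (fun y => φ y i -
            f y i * (∑ j : Fin (k + 1), f y j * φ y j)) x
          = Bx x i - (∑ j, f x j * φ x j) • Ax x i -
            f x i • (∑ j, (φ x j • Ax x j + f x j • Bx x j)) :=
        (stmt12_gradB f φ x (Ax x) (Bx x) hga hgb i).gradient
      have hs_bd : |∑ j, f x j * φ x j| ≤ (k+1) * M := by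
        calc |∑ j, f x j * φ x j| ≤ ∑ j, |f x j * φ x j| := Finset.abs_sum_le_sum_abs _ _
          _ ≤ ∑ _j : Fin (k+1), M := by
              refine Finset.sum_le_sum fun j _ => ?_
              rw [abs_mul]
              have := hub j; have := hvb j
              nlinarith [abs_nonneg (f x j), abs_nonneg (φ x j)]
          _ = (k+1) * M := by simp [Finset.sum_const, Finset.card_univ]
      have hP_bd : ‖∑ j, (φ x j • Ax x j + f x j • Bx x j)‖
          ≤ (k+1) * (M * (Kf:ℝ) + (Kφ:ℝ)) := by
        calc ‖∑ j, (φ x j • Ax x j + f x j • Bx x j)‖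
            ≤ ∑ j, ‖φ x j • Ax x j + f x j • Bx x j‖ := norm_sum_le _ _
          _ ≤ ∑ _j : Fin (k+1), (M * (Kf:ℝ) + (Kφ:ℝ)) := by
              refine Finset.sum_le_sum fun j _ => ?_
              calc ‖φ x j • Ax x j + f x j • Bx x j‖
                  ≤ ‖φ x j • Ax x j‖ + ‖f x j • Bx x j‖ := norm_add_le _ _
                _ ≤ M * (Kf:ℝ) + (Kφ:ℝ) := by
                    rw [norm_smul, norm_smul, Real.norm_eq_abs, Real.norm_eq_abs]
                    have h1 := mul_le_mul (hvb j) (hAb j) (norm_nonneg _) hM0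
                    have h2 := mul_le_mul (hub j) (hBb j) (norm_nonneg _) zero_le_one
                    nlinarith [h1, h2]
          _ = (k+1) * (M * (Kf:ℝ) + (Kφ:ℝ)) := by
              simp [Finset.sum_const, Finset.card_univ]
              ring
      have hW_bd : ‖Bx x i - (∑ j, f x j * φ x j) • Ax x i -
          f x i • (∑ j, (φ x j • Ax x j + f x j • Bx x j))‖ ≤ CW := by
        calc ‖Bx x i - (∑ j, f x j * φ x j) • Ax x i -
              f x i • (∑ j, (φ x j • Ax x j + f x j • Bx x j))‖
            ≤ ‖Bx x i - (∑ j, f x j * φ x j) • Ax x i‖ +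
              ‖f x i • (∑ j, (φ x j • Ax x j + f x j • Bx x j))‖ := norm_sub_le _ _
          _ ≤ (‖Bx x i‖ + ‖(∑ j, f x j * φ x j) • Ax x i‖) +
              ‖f x i • (∑ j, (φ x j • Ax x j + f x j • Bx x j))‖ := by
              gcongr
              exact norm_sub_le _ _
          _ ≤ CW := by
              rw [norm_smul, norm_smul, Real.norm_eq_abs, Real.norm_eq_abs, hCW]
              have h1 := hBb i
              have h2 := mul_le_mul hs_bd (hAb i) (norm_nonneg _)
                (by positivity : (0:ℝ) ≤ (k+1) * M)
              have h3 := mul_le_mul (hub i) hP_bd (norm_nonneg _) zero_le_one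
              nlinarith [h1, h2, h3]
      rw [Real.norm_eq_abs]
      simp only [hT]
      rw [hg2]
      calc |(inner ℝ (gradient (fun y => f y i) x)
            (Bx x i - (∑ j, f x j * φ x j) • Ax x i -
              f x i • (∑ j, (φ x j • Ax x j + f x j • Bx x j))) : ℝ)|
          ≤ ‖gradient (fun y => f y i) x‖ *
            ‖Bx x i - (∑ j, f x j * φ x j) • Ax x i -
              f x i • (∑ j, (φ x j • Ax x j + f x j • Bx x j))‖ :=
            abs_real_inner_le_norm _ _
        _ ≤ (Kf:ℝ) * CW := mul_le_mul (hAb i) hW_bd (norm_nonneg _) Kf.coe_nonneg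
  have hae0 : (fun x => Fd' 0 x) =ᶠ[ae μ] fun x => ∑ i, 2 * T i x := by
    filter_upwards [hgood] with x hx
    obtain ⟨hxΩ, hga, hgb, hzero, -, -, -, -, hQ1⟩ := hx
    simp only [hFd', Stmt12Aux.Fd]
    refine Finset.sum_congr rfl fun i _ => ?_
    rw [Stmt12Aux.Gf_zero hQ1 hzero, Stmt12Aux.Gd_zero hQ1 hzero]
    have hg2 : gradient (fun y => φ y i -
          f y i * (∑ j : Fin (k + 1), f y j * φ y j)) x
        = Bx x i - (∑ j, f x j * φ x j) • Ax x i -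
          f x i • (∑ j, (φ x j • Ax x j + f x j • Bx x j)) :=
      (stmt12_gradB f φ x (Ax x) (Bx x) hga hgb i).gradient
    simp only [hT]
    rw [hg2]
    rw [real_inner_comm (Bx x i - (∑ j, f x j * φ x j) • Ax x i -
      f x i • (∑ j, (φ x j • Ax x j + f x j • Bx x j))) (Ax x i)]
    ring_nf
  have hintegral_eq : ∫ x, Fd' 0 x ∂μ = 2 * ∑ i, ∫ x, T i x ∂μ := by
    rw [integral_congr_ae hae0]
    rw [integral_finset_sum _ fun i _ => (hT_int i).const_mul 2]
    rw [Finset.mul_sum]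
    exact Finset.sum_congr rfl fun i _ => integral_const_mul 2 _
  have hgoal := hderiv.const_mul (1/2 : ℝ)
  have hfun : (fun t : ℝ => dirichletEnergy Ω
      (fun x => ‖f x + t • φ x‖⁻¹ • (f x + t • φ x)))
      = fun t => (1/2 : ℝ) * ∫ x, Fm t x ∂μ := by
    funext t
    simp only [dirichletEnergy, hFm, hμdef]
  rw [hfun]
  refine hgoal.congr_deriv ?_
  rw [hintegral_eq]
  ring
end
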